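/- arXiv:1112.1389 — 7 statements merged into one kernel-verified Lean document; each statement's English description precedes it below -/
import Mathlib

section
/- Let p be a prime, n a nonnegative integer, G a finite group, and P a Sylow p-subgroup of G. If P has nilpotence class at most n(p-1)+1, then ℧ⁿ(Z(P)) is strongly closed in P with respect to G. -/
set_option linter.unusedSectionVars false
set_option maxHeartbeats 1000000

/-- `℧ᵐ`-style subgroup: the subgroup generated by the `m`-th powers of elements of `H`.
For a `p`-group `H` and `m = p ^ n`, this is `℧ⁿ(H)`. -/
def mho {G : Type*} [Group G] (m : ℕ) (H : Subgroup G) : Subgroup G :=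
  Subgroup.closure ((fun x => x ^ m) '' (H : Set G))

/-- `A` is strongly closed in `P` with respect to `G`. -/
def IsStronglyClosed {G : Type*} [Group G] (A P : Subgroup G) : Prop :=
  ∀ g : G, ∀ a ∈ A, g⁻¹ * a * g ∈ P → g⁻¹ * a * g ∈ A


open Subgroup hiding lowerCentralSeries upperCentralSeries

namespace SCaux

variable {G : Type*} [Group G]

/-- The "center" of a subgroup `K`, as a subgroup of the ambient group. -/
def ZC (K : Subgroup G) : Subgroup G := K ⊓ Subgroup.centralizer (K : Set G)

/-- Conjugate of a subgroup. -/
def cj (g : G) (K : Subgroup G) : Subgroup G := Subgroup.map (MulAut.conj g).toMonoidHom K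

lemma mem_cj {g a : G} {K : Subgroup G} : a ∈ cj g K ↔ g⁻¹ * a * g ∈ K := by
  constructor
  · rintro ⟨b, hb, rfl⟩
    simpa [MulAut.conj_apply, mul_assoc] using hb
  · intro h
    exact ⟨g⁻¹ * a * g, h, by simp [MulAut.conj_apply, mul_assoc]⟩

lemma cj_cj (g h : G) (K : Subgroup G) : cj g (cj h K) = cj (g * h) K := by
  ext a
  simp only [mem_cj, mul_inv_rev, mul_assoc]

lemma cj_one (K : Subgroup G) : cj 1 K = K := by
  ext a; simp [mem_cj]

lemma cj_inv_cj (g : G) (K : Subgroup G) : cj g (cj g⁻¹ K) = K := by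
  rw [cj_cj, mul_inv_cancel, cj_one]

lemma cj_mono {g : G} {K L : Subgroup G} (h : K ≤ L) : cj g K ≤ cj g L :=
  Subgroup.map_mono h

lemma cj_le_iff {g : G} {K L : Subgroup G} : cj g K ≤ L ↔ K ≤ cj g⁻¹ L := by
  constructor
  · intro h
    intro a ha
    rw [mem_cj]
    exact h (by rw [mem_cj]; simpa [mul_assoc] using ha)
  · intro h a ha
    rw [mem_cj] at ha
    have := h ha
    rw [mem_cj] at this
    simpa [mul_assoc] using this

lemma cj_inf (g : G) (K L : Subgroup G) : cj g (K ⊓ L) = cj g K ⊓ cj g L := by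
  ext a; simp [mem_cj]

lemma cj_eq_self_of_mem {g : G} {K : Subgroup G} (hg : g ∈ K) : cj g K = K := by
  ext a
  rw [mem_cj]
  constructor
  · intro h
    have := mul_mem (mul_mem hg h) (inv_mem hg)
    simpa [mul_assoc] using this
  · intro h
    exact mul_mem (mul_mem (inv_mem hg) h) hg

lemma cj_centralizer (g : G) (K : Subgroup G) :
    cj g (Subgroup.centralizer (K : Set G)) = Subgroup.centralizer ((cj g K : Subgroup G) : Set G) := by
  ext a
  rw [mem_cj, Subgroup.mem_centralizer_iff, Subgroup.mem_centralizer_iff]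
  constructor
  · intro h b hb
    rw [SetLike.mem_coe, mem_cj] at hb
    have hc := h _ hb
    calc b * a = g * ((g⁻¹ * b * g) * (g⁻¹ * a * g)) * g⁻¹ := by group
      _ = g * ((g⁻¹ * a * g) * (g⁻¹ * b * g)) * g⁻¹ := by rw [hc]
      _ = a * b := by group
  · intro h b hb
    have hb' : g * b * g⁻¹ ∈ cj g K := by rw [mem_cj]; simpa [mul_assoc] using hb
    have hc := h _ hb'
    calc b * (g⁻¹ * a * g) = g⁻¹ * ((g * b * g⁻¹) * a) * g := by group
      _ = g⁻¹ * (a * (g * b * g⁻¹)) * g := by rw [hc]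
      _ = (g⁻¹ * a * g) * b := by group

lemma cj_ZC (g : G) (K : Subgroup G) : cj g (ZC K) = ZC (cj g K) := by
  rw [ZC, ZC, cj_inf, cj_centralizer]

lemma cj_normalizer (g : G) (K : Subgroup G) :
    cj g (Subgroup.normalizer K) = Subgroup.normalizer (cj g K) := by
  unfold cj
  exact Subgroup.map_equiv_normalizer_eq K (MulAut.conj g)

lemma card_cj (g : G) (K : Subgroup G) : Nat.card (cj g K) = Nat.card K := by
  unfold cj
  exact Nat.card_congr ((MulAut.conj g).subgroupMap K).toEquiv.symm

lemma eq_of_le_of_card_le' [Finite G] {K L : Subgroup G} (h : K ≤ L)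
    (hc : Nat.card L ≤ Nat.card K) : K = L := by
  apply SetLike.coe_injective
  apply Set.eq_of_subset_of_ncard_le h
  rwa [← Nat.card_coe_set_eq, ← Nat.card_coe_set_eq]

lemma mem_ZC_iff {K : Subgroup G} {a : G} :
    a ∈ ZC K ↔ a ∈ K ∧ ∀ b ∈ K, b * a = a * b := by
  rw [ZC, Subgroup.mem_inf, Subgroup.mem_centralizer_iff]
  rfl

lemma ZC_le (K : Subgroup G) : ZC K ≤ K := inf_le_left

section Syl

variable {G : Type*} [Group G] [Finite G] {p : ℕ}

/-- `K` is a Sylow `p`-subgroup of the subgroup `H` (all within ambient `G`):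
a maximal `p`-subgroup of `H`. -/
def IsSyl (p : ℕ) (H K : Subgroup G) : Prop :=
  K ≤ H ∧ IsPGroup p K ∧ ∀ K' : Subgroup G, IsPGroup p K' → K ≤ K' → K' ≤ H → K' = K

lemma IsSyl.le {H K : Subgroup G} (h : IsSyl p H K) : K ≤ H := h.1
lemma IsSyl.pg {H K : Subgroup G} (h : IsSyl p H K) : IsPGroup p K := h.2.1
lemma IsSyl.max {H K : Subgroup G} (h : IsSyl p H K) :
    ∀ K' : Subgroup G, IsPGroup p K' → K ≤ K' → K' ≤ H → K' = K := h.2.2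

/-- Transport an `IsSyl` to a mathlib `Sylow p ↥H`. -/
noncomputable def IsSyl.toSylow {H K : Subgroup G} (h : IsSyl p H K) : Sylow p ↥H := by
  refine ⟨K.subgroupOf H, h.pg.comap_subtype, ?_⟩
  intro Q hQ hle
  have h1 : (K.subgroupOf H).map H.subtype = K := by
    rw [Subgroup.subgroupOf_map_subtype, inf_eq_left.mpr h.le]
  have h2 : Q.map H.subtype = K := by
    apply h.max _ (hQ.map _)
    · rw [← h1]; exact Subgroup.map_mono hle
    · exact Subgroup.map_subtype_le Q
  apply Subgroup.map_injective H.subtype_injective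
  rw [h2, h1]

lemma IsSyl.toSylow_coe {H K : Subgroup G} (h : IsSyl p H K) :
    ((h.toSylow : Subgroup ↥H)).map H.subtype = K := by
  show (K.subgroupOf H).map H.subtype = K
  rw [Subgroup.subgroupOf_map_subtype, inf_eq_left.mpr h.le]

lemma isSyl_ofSylow (H : Subgroup G) (S : Sylow p ↥H) : IsSyl p H ((S : Subgroup ↥H).map H.subtype) := by
  refine ⟨Subgroup.map_subtype_le _, S.2.map _, ?_⟩
  intro K' hK' hle hK'H
  have hQ' : IsPGroup p (K'.subgroupOf H) := hK'.comap_subtype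
  have hSQ : (S : Subgroup ↥H) ≤ K'.subgroupOf H := by
    intro s hs
    have : (s : G) ∈ K' := hle ⟨s, hs, rfl⟩
    exact this
  have := S.3 hQ' hSQ
  rw [← this, Subgroup.subgroupOf_map_subtype, inf_eq_left.mpr hK'H]

lemma exists_isSyl_ge {H K : Subgroup G} (hKH : K ≤ H) (hK : IsPGroup p K) :
    ∃ S : Subgroup G, IsSyl p H S ∧ K ≤ S := by
  obtain ⟨S, hS⟩ := (hK.comap_subtype (K := H)).exists_le_sylow
  refine ⟨(S : Subgroup ↥H).map H.subtype, isSyl_ofSylow H S, ?_⟩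
  intro k hk
  exact ⟨⟨k, hKH hk⟩, hS hk, rfl⟩

lemma exists_isSyl (hp : p.Prime) (H : Subgroup G) : ∃ S : Subgroup G, IsSyl p H S := by
  obtain ⟨S, hS, -⟩ := exists_isSyl_ge (bot_le : ⊥ ≤ H) (IsPGroup.of_bot (p := p))
  exact ⟨S, hS⟩

lemma cj_isSyl_of_mem {H K : Subgroup G} {g : G} (h : IsSyl p H K) (hg : g ∈ H) :
    IsSyl p H (cj g K) := by
  refine ⟨?_, h.pg.map _, ?_⟩
  · calc cj g K ≤ cj g H := cj_mono h.le
      _ = H := cj_eq_self_of_mem hg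
  · intro K' hK' hle hK'H
    have h1 : cj g⁻¹ K' ≤ H := by
      calc cj g⁻¹ K' ≤ cj g⁻¹ H := cj_mono hK'H
        _ = H := cj_eq_self_of_mem (inv_mem hg)
    have h2 : K ≤ cj g⁻¹ K' := by
      rw [← cj_le_iff (g := g)]  -- cj g K ≤ K'
      exact hle
    have h3 := h.max _ (hK'.map _) h2 h1
    calc K' = cj g (cj g⁻¹ K') := (cj_inv_cj g K').symm
      _ = cj g K := congrArg (cj g) h3

end Syl
section Syl2

open Pointwise

variable {G : Type*} [Group G] [Finite G] {p : ℕ}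

lemma map_smul_subtype (H : Subgroup G) (h : ↥H) (S : Subgroup ↥H) :
    (MulAut.conj h • S).map H.subtype = cj (h : G) (S.map H.subtype) := by
  ext a
  simp only [Subgroup.mem_map, mem_cj]
  constructor
  · rintro ⟨b, hb, rfl⟩
    rw [Subgroup.mem_pointwise_smul_iff_inv_smul_mem, MulAut.smul_def,
      MulAut.conj_inv_apply] at hb
    exact ⟨h⁻¹ * b * h, hb, by push_cast; rfl⟩
  · rintro ⟨c, hc, hcoe⟩
    refine ⟨h * c * h⁻¹, ?_, ?_⟩
    · rw [Subgroup.mem_pointwise_smul_iff_inv_smul_mem, MulAut.smul_def,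
        MulAut.conj_inv_apply]
      have : h⁻¹ * (h * c * h⁻¹) * h = c := by group
      rw [this]
      exact hc
    · have hc2 : (c : G) = (↑h)⁻¹ * a * ↑h := hcoe
      show ((h * c * h⁻¹ : ↥H) : G) = a
      push_cast
      rw [hc2]
      group

lemma isSyl_conj (hp : p.Prime) {H K1 K2 : Subgroup G} (h1 : IsSyl p H K1)
    (h2 : IsSyl p H K2) : ∃ g ∈ H, cj g K1 = K2 := by
  haveI : Fact p.Prime := ⟨hp⟩
  haveI : Finite (Sylow p ↥H) := by
    apply Finite.of_injective (fun S : Sylow p ↥H => ((S : Subgroup ↥H) : Set ↥H))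
    intro S T hST
    exact Sylow.ext (SetLike.ext' hST)
  obtain ⟨h, hh⟩ := MulAction.exists_smul_eq ↥H h1.toSylow h2.toSylow
  refine ⟨h, h.2, ?_⟩
  have := congrArg (fun S : Sylow p ↥H => ((S : Subgroup ↥H)).map H.subtype) hh
  simp only [Sylow.coe_subgroup_smul] at this
  rw [map_smul_subtype, h1.toSylow_coe, h2.toSylow_coe] at this
  exact this

lemma isSyl_card_eq (hp : p.Prime) {H K1 K2 : Subgroup G} (h1 : IsSyl p H K1)
    (h2 : IsSyl p H K2) : Nat.card K1 = Nat.card K2 := by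
  obtain ⟨g, -, hg⟩ := isSyl_conj hp h1 h2
  rw [← hg, card_cj]

lemma IsSyl.of_le_middle {H C K : Subgroup G} (h : IsSyl p H K) (hKC : K ≤ C)
    (hCH : C ≤ H) : IsSyl p C K :=
  ⟨hKC, h.pg, fun K' h1 h2 h3 => h.max K' h1 h2 (h3.trans hCH)⟩

lemma isSyl_inf_normal (hp : p.Prime) {H L P : Subgroup G} (hL : L ≤ H)
    (hLn : ∀ g ∈ H, cj g L ≤ L) (hP : IsSyl p H P) : IsSyl p L (P ⊓ L) := by
  refine ⟨inf_le_right, hP.pg.to_inf_left, ?_⟩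
  intro K' hK' hle hK'L
  obtain ⟨S, hS, hK'S⟩ := exists_isSyl_ge (hK'L.trans hL) hK'
  obtain ⟨g, hgH, hgS⟩ := isSyl_conj hp hS hP
  have hcjK' : cj g K' ≤ P ⊓ L := by
    apply le_inf
    · rw [← hgS]; exact cj_mono hK'S
    · exact le_trans (cj_mono hK'L) (hLn g hgH)
  have hchain : cj g K' ≤ K' := hcjK'.trans hle
  have hcard : Nat.card K' ≤ Nat.card (cj g K') := by rw [card_cj]
  have heq : cj g K' = K' := eq_of_le_of_card_le' hchain hcard
  exact le_antisymm (heq ▸ hcjK') hle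

lemma exists_normalizer_gt (hp : p.Prime) {T P : Subgroup G} (hPpg : IsPGroup p P)
    (hT : T < P) : ∃ y : G, y ∈ P ∧ y ∉ T ∧ y ∈ Subgroup.normalizer T := by
  haveI : Fact p.Prime := ⟨hp⟩
  haveI : Group.IsNilpotent ↥P := hPpg.isNilpotent
  have hTP : T ≤ P := hT.le
  have hlt : T.subgroupOf P < ⊤ := by
    rcases SetLike.exists_of_lt hT with ⟨z, hzP, hzT⟩
    apply lt_top_iff_ne_top.mpr
    intro htop
    rw [Subgroup.subgroupOf_eq_top] at htop
    exact hzT (htop hzP)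
  have hcond := normalizerCondition_of_isNilpotent (G := ↥P) _ hlt
  obtain ⟨y', hy'n, hy'T⟩ := SetLike.exists_of_lt hcond
  refine ⟨(y' : G), y'.2, ?_, ?_⟩
  · intro hyT
    exact hy'T (by exact hyT)
  · rw [Subgroup.mem_normalizer_iff]
    intro a
    constructor
    · intro haT
      have ha' : (⟨a, hTP haT⟩ : ↥P) ∈ T.subgroupOf P := haT
      have := (Subgroup.mem_normalizer_iff.mp hy'n ⟨a, hTP haT⟩).mp ha'
      exact this
    · intro haT
      have haP : a ∈ P := by
        have h1 : (y' : G) * a * (y' : G)⁻¹ ∈ P := hTP haT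
        have h2 : a = (y' : G)⁻¹ * ((y' : G) * a * (y' : G)⁻¹) * (y' : G) := by group
        rw [h2]
        exact mul_mem (mul_mem (inv_mem y'.2) h1) y'.2
      have ha' : (⟨(y' : G) * a * (y' : G)⁻¹, hTP haT⟩ : ↥P) ∈ T.subgroupOf P := haT
      have hcongr : (⟨(y' : G) * a * (y' : G)⁻¹, hTP haT⟩ : ↥P) = y' * ⟨a, haP⟩ * y'⁻¹ := by
        ext; push_cast; rfl
      rw [hcongr] at ha'
      have := (Subgroup.mem_normalizer_iff.mp hy'n ⟨a, haP⟩).mpr ha'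
      exact this

end Syl2
section Poly

open Polynomial

/-- Key binomial computation in `ℤ[X]`. -/
lemma pX_eq (p : ℕ) (hp : p.Prime) :
    (p : ℤ[X]) * X = ((X + 1) ^ p - 1) -
      ∑ k ∈ Finset.Icc 2 p, ((p.choose k : ℤ[X])) * X ^ k := by
  have hexp : (X + 1 : ℤ[X]) ^ p = ∑ k ∈ Finset.range (p + 1),
      X ^ k * ((p.choose k : ℤ[X])) := by
    rw [add_pow]
    apply Finset.sum_congr rfl
    intro k hk
    rw [one_pow, mul_one]
  have h2p : 2 ≤ p + 1 := by have := hp.two_le; omega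
  have hsplit : ∑ k ∈ Finset.range (p + 1), X ^ k * ((p.choose k : ℤ[X]))
      = (∑ k ∈ Finset.range 2, X ^ k * ((p.choose k : ℤ[X])))
        + ∑ k ∈ Finset.Ico 2 (p + 1), X ^ k * ((p.choose k : ℤ[X])) :=
    (Finset.sum_range_add_sum_Ico _ h2p).symm
  have hIco : Finset.Ico 2 (p + 1) = Finset.Icc 2 p := rfl
  have hlow : (∑ k ∈ Finset.range 2, X ^ k * ((p.choose k : ℤ[X])))
      = 1 + (p : ℤ[X]) * X := by
    rw [Finset.sum_range_succ, Finset.sum_range_one]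
    simp [Nat.choose_one_right]
    ring
  have hcomm : ∀ k ∈ Finset.Icc 2 p, X ^ k * ((p.choose k : ℤ[X]))
      = ((p.choose k : ℤ[X])) * X ^ k := fun k _ => mul_comm _ _
  rw [hexp, hsplit, hIco, hlow, Finset.sum_congr rfl hcomm]
  ring

lemma poly_aux {p : ℕ} (hp : p.Prime) :
    ∀ d e m : ℕ, m + 1 ≤ e → p + m ≤ e + d →
    (p : ℤ[X]) * X ^ e ∈ Ideal.span {(X : ℤ[X]) ^ (p + m), (X + 1) ^ p - 1} := by
  intro d
  induction d with
  | zero =>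
    intro e m h1 h2
    have : (p : ℤ[X]) * X ^ e = ((p : ℤ[X]) * X ^ (e - (p + m))) * X ^ (p + m) := by
      rw [mul_assoc, ← pow_add]
      congr 2
      omega
    rw [this]
    exact Ideal.mul_mem_left _ _ (Ideal.subset_span (Set.mem_insert _ _))
  | succ d ih =>
    intro e m h1 h2
    by_cases hcase : p + m ≤ e
    · have : (p : ℤ[X]) * X ^ e = ((p : ℤ[X]) * X ^ (e - (p + m))) * X ^ (p + m) := by
        rw [mul_assoc, ← pow_add]
        congr 2
        omega
      rw [this]
      exact Ideal.mul_mem_left _ _ (Ideal.subset_span (Set.mem_insert _ _))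
    · have he1 : 1 ≤ e := le_trans (Nat.le_add_left 1 m) h1
      have key : (p : ℤ[X]) * X ^ e = X ^ (e - 1) * ((p : ℤ[X]) * X) := by
        rw [show (X : ℤ[X]) ^ e = X ^ (e - 1) * X by rw [← pow_succ]; congr 1; omega]
        ring
      rw [key, pX_eq p hp, mul_sub, Finset.mul_sum]
      apply Ideal.sub_mem
      · exact Ideal.mul_mem_left _ _ (Ideal.subset_span (Set.mem_insert_of_mem _ rfl))
      · apply Ideal.sum_mem
        intro k hk
        obtain ⟨hk2, hkp⟩ := Finset.mem_Icc.mp hk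
        by_cases hkeqp : k = p
        · subst hkeqp
          have : (X : ℤ[X]) ^ (e - 1) * (((k.choose k : ℤ[X])) * X ^ k)
              = (X ^ (e - 1 + k - (k + m))) * X ^ (k + m) := by
            rw [Nat.choose_self]
            push_cast
            rw [one_mul, ← pow_add, ← pow_add]
            congr 1
            omega
          rw [this]
          exact Ideal.mul_mem_left _ _ (Ideal.subset_span (Set.mem_insert _ _))
        · have hdvd : p ∣ p.choose k := hp.dvd_choose_self (by omega) (by omega)
          obtain ⟨ck, hck⟩ := hdvd
          have hterm : (X : ℤ[X]) ^ (e - 1) * (((p.choose k : ℤ[X])) * X ^ k)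
              = ((ck : ℤ[X])) * ((p : ℤ[X]) * X ^ (k + e - 1)) := by
            rw [hck, show (k + e - 1) = (e - 1) + k by omega, pow_add]
            push_cast
            ring
          rw [hterm]
          apply Ideal.mul_mem_left
          apply ih (k + e - 1) m (by omega) (by omega)

lemma poly_main {p : ℕ} (hp : p.Prime) (n : ℕ) :
    ((p : ℤ[X])) ^ n * X ∈ Ideal.span {(X : ℤ[X]) ^ (n * (p - 1) + 1), (X + 1) ^ p - 1} := by
  induction n with
  | zero => simpa using Ideal.subset_span (Set.mem_insert _ _)
  | succ n ih =>
    rw [Ideal.mem_span_pair] at ih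
    obtain ⟨u, v, huv⟩ := ih
    have hc : (n + 1) * (p - 1) + 1 = p + (n * (p - 1) + 1 - 1) := by
      have hq : p - 1 + 1 = p := Nat.succ_pred_eq_of_pos hp.pos
      have h2 : (n + 1) * (p - 1) + 1 = n * (p - 1) + (p - 1 + 1) := by ring
      rw [h2, hq, Nat.add_sub_cancel]
      omega
    have expand : ((p : ℤ[X])) ^ (n + 1) * X
        = u * ((p : ℤ[X]) * X ^ (n * (p - 1) + 1))
          + ((p : ℤ[X]) * v) * ((X + 1) ^ p - 1) := by
      have h3 : ((p : ℤ[X])) ^ (n + 1) * X = (p : ℤ[X]) * (((p : ℤ[X])) ^ n * X) := by ring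
      rw [h3, ← huv]
      ring
    rw [expand]
    apply Ideal.add_mem
    · apply Ideal.mul_mem_left
      have := poly_aux hp p (n * (p - 1) + 1) (n * (p - 1) + 1 - 1) (by omega) (by omega)
      rwa [← hc] at this
    · exact Ideal.mul_mem_left _ _ (Ideal.subset_span (Set.mem_insert_of_mem _ rfl))

end Poly
section LCS

variable {G : Type*} [Group G]

open scoped commutatorElement

lemma map_lcs_le {H1 H2 : Type*} [Group H1] [Group H2] (f : H1 →* H2) :
    ∀ j, Subgroup.map f (lowerCentralSeries (⊤ : Subgroup H1) j) ≤ lowerCentralSeries (⊤ : Subgroup H2) j := by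
  intro j
  induction j with
  | zero => exact le_top
  | succ j ih =>
    show Subgroup.map f ⁅lowerCentralSeries (⊤ : Subgroup H1) j, ⊤⁆ ≤ ⁅lowerCentralSeries (⊤ : Subgroup H2) j, ⊤⁆
    rw [Subgroup.map_commutator]
    exact Subgroup.commutator_mono ih le_top

lemma lcs_bot_of_injective {H1 H2 : Type*} [Group H1] [Group H2] (f : H1 →* H2)
    (hf : Function.Injective f) {c : ℕ} (h2 : lowerCentralSeries (⊤ : Subgroup H2) c = ⊥) :
    lowerCentralSeries (⊤ : Subgroup H1) c = ⊥ := by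
  rw [eq_bot_iff]
  intro a ha
  have : f a ∈ Subgroup.map f (lowerCentralSeries (⊤ : Subgroup H1) c) := ⟨a, ha, rfl⟩
  have := map_lcs_le f c this
  rw [h2, Subgroup.mem_bot] at this
  have : f a = f 1 := by rw [this, map_one]
  rw [Subgroup.mem_bot]
  exact hf this

lemma lcs_bot_of_le {K Q : Subgroup G} {c : ℕ} (hKQ : K ≤ Q)
    (hQ : lowerCentralSeries (⊤ : Subgroup ↥Q) c = ⊥) : lowerCentralSeries (⊤ : Subgroup ↥K) c = ⊥ :=
  lcs_bot_of_injective (Subgroup.inclusion hKQ)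
    (Subgroup.inclusion_injective hKQ) hQ

/-- Iterated commutator with a fixed element lands in the lower central series. -/
lemma iter_commutator_mem {K : Subgroup G} {y v : G} (hy : y ∈ K) (hv : v ∈ K) :
    ∀ j, (fun a => y * a * y⁻¹ * a⁻¹)^[j] v ∈
      Subgroup.map K.subtype (lowerCentralSeries (⊤ : Subgroup ↥K) j) := by
  intro j
  induction j with
  | zero => exact ⟨⟨v, hv⟩, Subgroup.mem_top _, rfl⟩
  | succ j ih =>
    rw [Function.iterate_succ_apply']
    obtain ⟨a', ha', hcoe⟩ := ih
    have hmem : ⁅(⟨y, hy⟩ : ↥K), a'⁆ ∈ lowerCentralSeries (⊤ : Subgroup ↥K) (j + 1) := by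
      show ⁅(⟨y, hy⟩ : ↥K), a'⁆ ∈ ⁅lowerCentralSeries (⊤ : Subgroup ↥K) j, ⊤⁆
      rw [Subgroup.commutator_comm]
      exact Subgroup.commutator_mem_commutator (Subgroup.mem_top _) ha'
    refine ⟨⁅(⟨y, hy⟩ : ↥K), a'⁆, hmem, ?_⟩
    rw [map_commutatorElement]
    show y * K.subtype a' * y⁻¹ * (K.subtype a')⁻¹ = _
    rw [hcoe]

lemma iter_commutator_eq_one {K : Subgroup G} {y v : G} (hy : y ∈ K) (hv : v ∈ K)
    {c : ℕ} (hc : lowerCentralSeries (⊤ : Subgroup ↥K) c = ⊥) :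
    (fun a => y * a * y⁻¹ * a⁻¹)^[c] v = 1 := by
  have := iter_commutator_mem hy hv (K := K) c
  rw [hc] at this
  obtain ⟨a', ha', hcoe⟩ := this
  have h1 : a' = 1 := by simpa using ha'
  rw [← hcoe, h1]
  simp

end LCS
section Core

variable {G : Type*} [Group G] [Finite G]

lemma mem_normalizer_iff_cj_eq {y : G} {K : Subgroup G} :
    y ∈ Subgroup.normalizer K ↔ cj y K = K := by
  rw [Subgroup.mem_normalizer_iff]
  constructor
  · intro h
    ext a
    rw [mem_cj]
    have h2 := h (y⁻¹ * a * y)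
    have e : y * (y⁻¹ * a * y) * y⁻¹ = a := by group
    rw [e] at h2
    exact h2
  · intro h a
    constructor
    · intro ha
      have : y * a * y⁻¹ ∈ cj y K := by
        rw [mem_cj]
        have e : y⁻¹ * (y * a * y⁻¹) * y = a := by group
        rw [e]
        exact ha
      rwa [h] at this
    · intro ha
      rw [← h, mem_cj] at ha
      have e : y⁻¹ * (y * a * y⁻¹) * y = a := by group
      rwa [e] at ha

lemma core {p n : ℕ} (hp : p.Prime) {P : Subgroup G}
    (hPpg : IsPGroup p P) (hlcs : lowerCentralSeries (⊤ : Subgroup ↥P) (n * (p - 1) + 1) = ⊥)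
    {x w : G} (hxP : x ∈ P)
    (hw : w ∈ ZC (Subgroup.centralizer {x} ⊓ P)) (hwx : w ^ p ^ n = x) :
    P ≤ Subgroup.centralizer {x} := by
  classical
  set c := n * (p - 1) + 1 with hc
  set T := Subgroup.centralizer {x} ⊓ P with hTdef
  by_contra hPC
  have hTP : T < P := by
    rcases lt_or_eq_of_le (inf_le_right : T ≤ P) with h | h
    · exact h
    · exact absurd ((le_of_eq h.symm).trans (inf_le_left : T ≤ Subgroup.centralizer {x})) hPC
  obtain ⟨y0, hy0P, hy0T, hy0N⟩ := exists_normalizer_gt hp hPpg hTP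
  obtain ⟨k, hk⟩ := hPpg ⟨y0, hy0P⟩
  have hk' : y0 ^ p ^ k ∈ T := by
    have h2 : y0 ^ p ^ k = 1 := by
      have h3 := congrArg (Subgroup.subtype P) hk
      simpa using h3
    rw [h2]
    exact one_mem T
  have hex : ∃ j, y0 ^ p ^ j ∈ T := ⟨k, hk'⟩
  set j := Nat.find hex with hjdef
  have hj : y0 ^ p ^ j ∈ T := Nat.find_spec hex
  have hj1 : 1 ≤ j := by
    rcases Nat.eq_zero_or_pos j with h0 | h1
    · exfalso
      apply hy0T
      have := hj
      rw [h0] at this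
      simpa using this
    · exact h1
  set y := y0 ^ p ^ (j - 1) with hydef
  have hyP : y ∈ P := pow_mem hy0P _
  have hyT : y ∉ T := Nat.find_min hex (by omega)
  have hypT : y ^ p ∈ T := by
    have hjj : j - 1 + 1 = j := by omega
    have : y ^ p = y0 ^ p ^ j := by
      rw [hydef, ← pow_mul, ← pow_succ, hjj]
    rw [this]
    exact hj
  have hyN : y ∈ Subgroup.normalizer T := pow_mem hy0N _
  -- the abelian group V = Z(T)
  set V := ZC T with hVdef
  have hVle : V ≤ P := (ZC_le T).trans hTP.le
  have hyNV : y ∈ Subgroup.normalizer V := by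
    rw [mem_normalizer_iff_cj_eq] at hyN ⊢
    rw [hVdef, cj_ZC, hyN]
  have hxT : x ∈ T := by
    refine ⟨Subgroup.mem_centralizer_iff.mpr ?_, hxP⟩
    intro h hh
    rw [Set.mem_singleton_iff] at hh
    rw [hh]
  have hxV : x ∈ V := by
    rw [hVdef, mem_ZC_iff]
    refine ⟨hxT, ?_⟩
    intro b hb
    have hb1 : b ∈ Subgroup.centralizer {x} := hb.1
    exact (Subgroup.mem_centralizer_iff.mp hb1 x rfl).symm
  have hwV : w ∈ V := hw
  letI : CommGroup ↥V :=
    { (inferInstance : Group ↥V) with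
      mul_comm := fun a b => Subtype.ext ((mem_ZC_iff.mp b.2).2 (a : G) (ZC_le T a.2)) }
  -- conjugation endomorphism
  have hmemσ : ∀ v : ↥V, y * (v : G) * y⁻¹ ∈ V :=
    fun v => (Subgroup.mem_normalizer_iff.mp hyNV (v : G)).mp v.2
  let σm : ↥V →* ↥V := MonoidHom.mk' (fun v => ⟨y * v * y⁻¹, hmemσ v⟩)
    (by
      intro a b
      ext
      show y * (↑a * ↑b) * y⁻¹ = (y * ↑a * y⁻¹) * (y * ↑b * y⁻¹)
      group)
  let A := Additive ↥V
  let cA : A → G := fun a => ((Additive.toMul a : ↥V) : G)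
  have hinj : Function.Injective cA := fun a b h => by
    have h1 : (Additive.toMul a : ↥V) = Additive.toMul b := Subtype.ext h
    exact Additive.toMul.injective h1
  let σE : AddMonoid.End A := MonoidHom.toAdditive σm
  let τE : AddMonoid.End A := σE - 1
  have hσcoe : ∀ a : A, cA (σE a) = y * cA a * y⁻¹ := fun a => rfl
  have hcA1 : cA 0 = 1 := rfl
  have hpow : ∀ (m : ℕ) (a : A), cA ((σE ^ m) a) = y ^ m * cA a * (y ^ m)⁻¹ := by
    intro m
    induction m with
    | zero => intro a; simp [pow_zero]
    | succ m ih =>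
      intro a
      have h1 : ((σE ^ (m + 1)) a) = (σE ^ m) (σE a) := by
        rw [pow_succ]
        rfl
      rw [h1, ih (σE a), hσcoe a, pow_succ, mul_inv_rev]
      simp [mul_assoc]
  have hσp : σE ^ p = 1 := by
    refine DFunLike.ext _ _ fun a => hinj ?_
    rw [hpow p a]
    have hcomm : y ^ p * cA a = cA a * y ^ p :=
      (mem_ZC_iff.mp (Additive.toMul a).2).2 (y ^ p) hypT
    rw [hcomm, mul_assoc, mul_inv_cancel, mul_one]
    rfl
  have hτcoe : ∀ a : A, cA (τE a) = y * cA a * y⁻¹ * (cA a)⁻¹ := by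
    intro a
    have h1 : τE a = σE a - a := rfl
    rw [h1]
    show ((Additive.toMul (σE a - a) : ↥V) : G) = _
    rw [toMul_sub]
    push_cast
    rw [div_eq_mul_inv]
    push_cast
    rfl
  have hτpow : ∀ (m : ℕ) (a : A),
      cA ((τE ^ m) a) = (fun b => y * b * y⁻¹ * b⁻¹)^[m] (cA a) := by
    intro m
    induction m with
    | zero => intro a; simp [pow_zero]
    | succ m ih =>
      intro a
      have h1 : ((τE ^ (m + 1)) a) = τE ((τE ^ m) a) := by
        rw [pow_succ']
        rfl
      rw [h1, hτcoe, ih a, Function.iterate_succ_apply']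
  have hτc : τE ^ c = 0 := by
    refine DFunLike.ext _ _ fun a => hinj ?_
    rw [hτpow c a]
    have := iter_commutator_eq_one hyP (hVle (Additive.toMul a).2) hlcs
    rw [this]
    rfl
  -- polynomial evaluation
  let ψ := Polynomial.aeval (R := ℤ) τE
  obtain ⟨u, v, huv⟩ := Ideal.mem_span_pair.mp (poly_main hp n)
  have happ := congrArg ψ huv
  have hψXc : ψ ((Polynomial.X : Polynomial ℤ) ^ c) = 0 := by
    rw [map_pow, Polynomial.aeval_X, hτc]
  have hψW : ψ ((Polynomial.X + 1) ^ p - 1) = 0 := by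
    rw [map_sub, map_pow, map_add, Polynomial.aeval_X, map_one]
    have hστ : τE + 1 = σE := sub_add_cancel σE 1
    rw [hστ, hσp, sub_self]
  have hLHS : ψ (u * Polynomial.X ^ c + v * ((Polynomial.X + 1) ^ p - 1)) = 0 := by
    rw [map_add, map_mul, map_mul, hψXc, hψW, mul_zero, mul_zero, add_zero]
  have hRHS : ψ ((↑p : Polynomial ℤ) ^ n * Polynomial.X) = (↑(p ^ n) : AddMonoid.End A) * τE := by
    rw [map_mul, map_pow, Polynomial.aeval_X, Polynomial.aeval_natCast]
    push_cast
    ring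
  have hzero : (↑(p ^ n) : AddMonoid.End A) * τE = 0 := by
    rw [← hRHS, ← huv, hLHS]
  -- evaluate at w
  have hweval : τE (Additive.ofMul ((⟨x, hxV⟩ : ↥V))) = 0 := by
    have h0 := congrArg (fun f : AddMonoid.End A => f (Additive.ofMul (⟨w, hwV⟩ : ↥V))) hzero
    simp only [AddMonoid.End.zero_apply] at h0
    have h1 : ((↑(p ^ n) : AddMonoid.End A) * τE) (Additive.ofMul (⟨w, hwV⟩ : ↥V))
        = (p ^ n) • (τE (Additive.ofMul (⟨w, hwV⟩ : ↥V))) := by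
      rfl
    rw [h1] at h0
    have h2 : (p ^ n) • (τE (Additive.ofMul (⟨w, hwV⟩ : ↥V)))
        = τE ((p ^ n) • (Additive.ofMul (⟨w, hwV⟩ : ↥V))) := by
      exact (map_nsmul τE _ _).symm
    rw [h2] at h0
    have h3 : (p ^ n) • (Additive.ofMul (⟨w, hwV⟩ : ↥V))
        = Additive.ofMul ((⟨x, hxV⟩ : ↥V)) := by
      rw [← ofMul_pow]
      congr 1
      ext
      push_cast
      exact hwx
    rwa [h3] at h0
  -- contradiction
  have hfinal : y * x * y⁻¹ * x⁻¹ = 1 := by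
    have := congrArg cA hweval
    rw [hτcoe] at this
    have hcx : cA (Additive.ofMul ((⟨x, hxV⟩ : ↥V))) = x := rfl
    rw [hcx] at this
    rw [this]
    rfl
  apply hyT
  refine ⟨Subgroup.mem_centralizer_iff.mpr ?_, hyP⟩
  intro h hh
  rw [Set.mem_singleton_iff] at hh
  subst hh
  have h7 : y * h * y⁻¹ = h := by
    have h8 := hfinal
    rwa [mul_inv_eq_one] at h8
  calc h * y = (y * h * y⁻¹) * y := by rw [h7]
    _ = y * h := by group

end Core
section Star

variable {G : Type*} [Group G] [Finite G]

lemma conjg_pow (g a : G) (m : ℕ) : (g * a * g⁻¹) ^ m = g * a ^ m * g⁻¹ := by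
  induction m with
  | zero => simp
  | succ m ih => rw [pow_succ, pow_succ, ih]; group

lemma cj_centralizer_singleton (g x : G) :
    cj g (Subgroup.centralizer {x}) = Subgroup.centralizer {g * x * g⁻¹} := by
  ext a
  rw [mem_cj, Subgroup.mem_centralizer_iff, Subgroup.mem_centralizer_iff]
  simp only [Set.mem_singleton_iff, forall_eq]
  constructor
  · intro h
    calc (g * x * g⁻¹) * a = g * (x * (g⁻¹ * a * g)) * g⁻¹ := by group
      _ = g * ((g⁻¹ * a * g) * x) * g⁻¹ := by rw [h]
      _ = a * (g * x * g⁻¹) := by group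
  · intro h
    calc x * (g⁻¹ * a * g) = g⁻¹ * ((g * x * g⁻¹) * a) * g := by group
      _ = g⁻¹ * (a * (g * x * g⁻¹)) * g := by rw [h]
      _ = (g⁻¹ * a * g) * x := by group

lemma card_lt_of_lt' {K L : Subgroup G} (h : K < L) : Nat.card K < Nat.card L := by
  have h2 := Set.ncard_lt_ncard (SetLike.coe_ssubset_coe.mpr h) (Set.toFinite _)
  rwa [← Nat.card_coe_set_eq, ← Nat.card_coe_set_eq] at h2

lemma starThm {p nn : ℕ} (hp : p.Prime)
    (HB : ∀ K : Subgroup G, IsPGroup p K → lowerCentralSeries (⊤ : Subgroup ↥K) (nn * (p - 1) + 1) = ⊥) :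
    ∀ M : ℕ, ∀ H P Q : Subgroup G, ∀ u x : G,
      Nat.card H * Nat.card G
        + (Nat.card P - Nat.card ↥(Subgroup.centralizer {x} ⊓ P)) ≤ M →
      IsSyl p H P → IsSyl p H Q → u ∈ ZC Q → u ^ p ^ nn = x → x ∈ P →
      ∃ w ∈ ZC P, w ^ p ^ nn = x := by
  intro M
  induction M using Nat.strong_induction_on with
  | _ M IH =>
  intro H P Q u x hM hSP hSQ huZ hux hxP
  have hcardG1 : 1 ≤ Nat.card G := Nat.card_pos
  -- Q centralizes x
  have hxQle : Q ≤ Subgroup.centralizer {x} := by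
    intro q hq
    rw [Subgroup.mem_centralizer_iff]
    intro h hh
    rw [Set.mem_singleton_iff] at hh
    subst hh
    have hcomm : Commute q u := (mem_ZC_iff.mp huZ).2 q hq
    have := hcomm.pow_right (p ^ nn)
    rw [hux] at this
    exact this.symm
  set C := Subgroup.centralizer {x} ⊓ H with hC
  have hCH : C ≤ H := inf_le_right
  have hQC : Q ≤ C := le_inf hxQle hSQ.le
  have hQSylC : IsSyl p C Q := hSQ.of_le_middle hQC hCH
  set T := Subgroup.centralizer {x} ⊓ P with hT
  have hTP : T ≤ P := inf_le_right
  have hTC : T ≤ C := inf_le_inf_left _ hSP.le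
  have hxcent : x ∈ Subgroup.centralizer {x} := by
    rw [Subgroup.mem_centralizer_iff]
    intro h hh
    rw [Set.mem_singleton_iff] at hh
    rw [hh]
  have hxT : x ∈ T := ⟨hxcent, hxP⟩
  have hTpg : IsPGroup p T := hSP.pg.to_le hTP
  have hxZT : x ∈ ZC T := by
    rw [mem_ZC_iff]
    refine ⟨hxT, ?_⟩
    intro b hb
    exact (Subgroup.mem_centralizer_iff.mp hb.1 x rfl).symm
  -- Sylow R of C containing T, with conjugated witness u1
  obtain ⟨R, hRSylC, hTR⟩ := exists_isSyl_ge hTC hTpg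
  obtain ⟨c0, hc0C, hc0⟩ := isSyl_conj hp hQSylC hRSylC
  set u1 := c0 * u * c0⁻¹ with hu1def
  have hu1R : u1 ∈ ZC R := by
    rw [← hc0, ← cj_ZC, mem_cj]
    have e : c0⁻¹ * u1 * c0 = u := by rw [hu1def]; group
    rw [e]
    exact huZ
  have hc0cent : c0 ∈ Subgroup.centralizer {x} := hc0C.1
  have hc0x : c0 * x * c0⁻¹ = x := by
    have := Subgroup.mem_centralizer_iff.mp hc0cent x rfl
    calc c0 * x * c0⁻¹ = (x * c0) * c0⁻¹ := by rw [← this]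
      _ = x := by group
  have hu1x : u1 ^ p ^ nn = x := by
    rw [hu1def, conjg_pow, hux, hc0x]
  have hRC : R ≤ C := hRSylC.le
  have hRcent : R ≤ Subgroup.centralizer {x} := hRC.trans inf_le_left
  have hRSylH : IsSyl p H R := by
    rw [← hc0]
    exact cj_isSyl_of_mem hSQ (hCH hc0C)
  by_cases hPcent : P ≤ Subgroup.centralizer {x}
  · -- Case 1 : x is central in P
    have hPC : P ≤ C := le_inf hPcent hSP.le
    have hPSylC : IsSyl p C P := hSP.of_le_middle hPC hCH
    obtain ⟨c1, hc1C, hc1⟩ := isSyl_conj hp hRSylC hPSylC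
    have hc1x : c1 * x * c1⁻¹ = x := by
      have := Subgroup.mem_centralizer_iff.mp hc1C.1 x rfl
      calc c1 * x * c1⁻¹ = (x * c1) * c1⁻¹ := by rw [← this]
        _ = x := by group
    refine ⟨c1 * u1 * c1⁻¹, ?_, ?_⟩
    · rw [← hc1, ← cj_ZC, mem_cj]
      have e : c1⁻¹ * (c1 * u1 * c1⁻¹) * c1 = u1 := by group
      rw [e]
      exact hu1R
    · rw [conjg_pow, hu1x, hc1x]
  · -- Case 2 : x is not central in P
    have hTltP : T < P :=
      lt_of_le_of_ne hTP fun h => hPcent ((le_of_eq h.symm).trans inf_le_left)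
    have hcardTP : Nat.card T < Nat.card P := card_lt_of_lt' hTltP
    have hcardRP : Nat.card R = Nat.card P := isSyl_card_eq hp hRSylH hSP
    have hTltR : T < R := by
      refine lt_of_le_of_ne hTR fun h => ?_
      rw [h] at hcardTP
      omega
    set N1 := Subgroup.normalizer T ⊓ P with hN1
    set N2 := Subgroup.normalizer T ⊓ R with hN2
    have hTleN1 : T ≤ N1 := le_inf Subgroup.le_normalizer hTP
    have hTleN2 : T ≤ N2 := le_inf Subgroup.le_normalizer hTR
    have hTltN1 : T < N1 := by
      obtain ⟨yy, hyyP, hyyT, hyyN⟩ := exists_normalizer_gt hp hSP.pg hTltP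
      exact lt_of_le_of_ne hTleN1 fun h => hyyT (h ▸ (⟨hyyN, hyyP⟩ : yy ∈ N1))
    have hTltN2 : T < N2 := by
      obtain ⟨yy, hyyR, hyyT, hyyN⟩ := exists_normalizer_gt hp hRSylC.pg hTltR
      exact lt_of_le_of_ne hTleN2 fun h => hyyT (h ▸ (⟨hyyN, hyyR⟩ : yy ∈ N2))
    set Nn := Subgroup.normalizer T ⊓ H with hNn
    have hN1Nn : N1 ≤ Nn := inf_le_inf_left _ hSP.le
    have hN2Nn : N2 ≤ Nn := inf_le_inf_left _ (hRC.trans hCH)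
    have hNnH : Nn ≤ H := inf_le_right
    have hBM : Nat.card H * Nat.card G ≤ M := le_trans (Nat.le_add_right _ _) hM
    by_cases hNH : Nn = H
    · -- Case 2b : T is "normal in H"; descend to L = C_H(Z(T))
      have hHnormT : ∀ g ∈ H, cj g T = T := by
        intro g hg
        have : g ∈ Subgroup.normalizer T := (le_of_eq hNH.symm hg).1
        exact mem_normalizer_iff_cj_eq.mp this
      set Vz := ZC T with hVz
      set L := Subgroup.centralizer (Vz : Set G) ⊓ H with hL
      have hLH : L ≤ H := inf_le_right
      have hTcentV : T ≤ Subgroup.centralizer (Vz : Set G) := by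
        intro t ht
        rw [Subgroup.mem_centralizer_iff]
        intro v hv
        exact ((mem_ZC_iff.mp hv).2 t ht).symm
      have hTL : T ≤ L := le_inf hTcentV (hTP.trans hSP.le)
      have hLnormal : ∀ g ∈ H, cj g L ≤ L := by
        intro g hg
        have h1 : cj g L = L := by
          rw [hL, cj_inf, cj_centralizer, cj_eq_self_of_mem hg, hVz, cj_ZC, hHnormT g hg]
        rw [h1]
      have hPLSyl : IsSyl p L (P ⊓ L) := isSyl_inf_normal hp hLH hLnormal hSP
      have hRLSyl : IsSyl p L (R ⊓ L) := isSyl_inf_normal hp hLH hLnormal hRSylH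
      have hu1RL : u1 ∈ R ⊓ L := by
        apply Subgroup.mem_inf.mpr
        refine ⟨ZC_le _ hu1R, ?_⟩
        apply Subgroup.mem_inf.mpr
        refine ⟨?_, hCH (hRC (ZC_le _ hu1R))⟩
        apply Subgroup.mem_centralizer_iff.mpr
        intro v hv
        exact (mem_ZC_iff.mp hu1R).2 v (hTR (ZC_le T hv))
      have hu1ZRL : u1 ∈ ZC (R ⊓ L) := by
        rw [mem_ZC_iff]
        exact ⟨hu1RL, fun b hb => (mem_ZC_iff.mp hu1R).2 b hb.1⟩
      have hxL : x ∈ L := by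
        apply Subgroup.mem_inf.mpr
        refine ⟨?_, hSP.le hxP⟩
        apply Subgroup.mem_centralizer_iff.mpr
        intro v hv
        have hvT : v ∈ T := ZC_le T hv
        have hvc : v ∈ Subgroup.centralizer {x} := (Subgroup.mem_inf.mp hvT).1
        exact (Subgroup.mem_centralizer_iff.mp hvc x rfl).symm
      have hxPL : x ∈ P ⊓ L := ⟨hxP, hxL⟩
      by_cases hLeqH : L = H
      · -- impossible : then P centralizes x
        exfalso
        apply hPcent
        intro g hg
        have hgL : g ∈ L := hLeqH ▸ hSP.le hg
        apply Subgroup.mem_centralizer_iff.mpr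
        intro hh hhh
        rw [Set.mem_singleton_iff] at hhh
        subst hhh
        exact Subgroup.mem_centralizer_iff.mp (Subgroup.mem_inf.mp hgL).1 hh hxZT
      · -- recurse into L
        have hLltH : Nat.card L < Nat.card H :=
          card_lt_of_lt' (lt_of_le_of_ne hLH hLeqH)
        have hcardPLG : Nat.card ↥(P ⊓ L) ≤ Nat.card G := Subgroup.card_le_card_group _
        have hcard1 : 1 ≤ Nat.card ↥(Subgroup.centralizer {x} ⊓ (P ⊓ L)) := Nat.card_pos
        have hmul : Nat.card L * Nat.card G + Nat.card G ≤ Nat.card H * Nat.card G := by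
          calc Nat.card L * Nat.card G + Nat.card G = (Nat.card L + 1) * Nat.card G := by ring
            _ ≤ Nat.card H * Nat.card G := Nat.mul_le_mul_right _ (by omega)
        have hmeas : Nat.card L * Nat.card G
            + (Nat.card ↥(P ⊓ L) - Nat.card ↥(Subgroup.centralizer {x} ⊓ (P ⊓ L))) < M := by
          omega
        obtain ⟨w, hwZ, hwx⟩ := IH _ hmeas L (P ⊓ L) (R ⊓ L) u1 x le_rfl
          hPLSyl hRLSyl hu1ZRL hu1x hxPL
        -- P ⊓ L = T
        have hPLT : P ⊓ L = T := by
          apply le_antisymm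
          · intro a ha
            obtain ⟨haP, haL⟩ := Subgroup.mem_inf.mp ha
            apply Subgroup.mem_inf.mpr
            refine ⟨?_, haP⟩
            apply Subgroup.mem_centralizer_iff.mpr
            intro hh hhh
            rw [Set.mem_singleton_iff] at hhh
            subst hhh
            exact Subgroup.mem_centralizer_iff.mp (Subgroup.mem_inf.mp haL).1 hh hxZT
          · exact le_inf hTP hTL
        rw [hPLT] at hwZ
        -- CORE : contradiction
        exfalso
        exact hPcent (core hp hSP.pg (HB P hSP.pg) hxP hwZ hwx)
    · -- Case 2a : N_H(T) < H
      have hN1pg : IsPGroup p N1 := hSP.pg.to_le inf_le_right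
      have hN2pg : IsPGroup p N2 := hRSylC.pg.to_le inf_le_right
      obtain ⟨W, hWSyl, hN1W⟩ := exists_isSyl_ge hN1Nn hN1pg
      obtain ⟨V2, hV2Syl, hN2V2⟩ := exists_isSyl_ge hN2Nn hN2pg
      obtain ⟨h, hhNn, hhV2⟩ := isSyl_conj hp hV2Syl hWSyl
      have hhH : h ∈ H := hNnH hhNn
      have hhnorm : h ∈ Subgroup.normalizer T := hhNn.1
      set x' := h * x * h⁻¹ with hx'
      have hx'ZT : x' ∈ ZC T := by
        have hcjT : cj h T = T := mem_normalizer_iff_cj_eq.mp hhnorm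
        have hmem : x' ∈ cj h (ZC T) := by
          rw [mem_cj]
          have e : h⁻¹ * x' * h = x := by rw [hx']; group
          rw [e]
          exact hxZT
        rwa [cj_ZC, hcjT] at hmem
      obtain ⟨Pst, hPstSyl, hWPst⟩ := exists_isSyl_ge (hWSyl.le.trans hNnH) hWSyl.pg
      have hRhSyl : IsSyl p H (cj h R) := cj_isSyl_of_mem hRSylH hhH
      have hu1h : h * u1 * h⁻¹ ∈ ZC (cj h R) := by
        rw [← cj_ZC, mem_cj]
        have e : h⁻¹ * (h * u1 * h⁻¹) * h = u1 := by group
        rw [e]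
        exact hu1R
      have hu1hx : (h * u1 * h⁻¹) ^ p ^ nn = x' := by
        rw [conjg_pow, hu1x]
      have hTW : T ≤ W := le_trans hTleN1 hN1W
      have hTPst : T ≤ Pst := hTW.trans hWPst
      have hx'Pst : x' ∈ Pst := hTPst (ZC_le T hx'ZT)
      -- measure for the pair (Pst, x')
      have hcardPst : Nat.card Pst = Nat.card P := isSyl_card_eq hp hPstSyl hSP
      have hcjN2 : cj h N2 ≤ Subgroup.centralizer {x'} ⊓ Pst := by
        apply le_inf
        · rw [hx', ← cj_centralizer_singleton]
          apply cj_mono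
          exact (inf_le_right : N2 ≤ R).trans hRcent
        · exact le_trans (cj_mono hN2V2) (le_of_eq hhV2) |>.trans hWPst
      have hcardcj : Nat.card T < Nat.card ↥(Subgroup.centralizer {x'} ⊓ Pst) := by
        calc Nat.card T < Nat.card N2 := card_lt_of_lt' hTltN2
          _ = Nat.card ↥(cj h N2) := (card_cj h N2).symm
          _ ≤ _ := Subgroup.card_le_of_le hcjN2
      have hcardcent' : Nat.card ↥(Subgroup.centralizer {x'} ⊓ Pst) ≤ Nat.card Pst :=
        Subgroup.card_le_of_le inf_le_right
      have hmeas1 : Nat.card H * Nat.card G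
          + (Nat.card Pst - Nat.card ↥(Subgroup.centralizer {x'} ⊓ Pst)) < M := by
        omega
      obtain ⟨w1, hw1Z, hw1x⟩ := IH _ hmeas1 H Pst (cj h R) (h * u1 * h⁻¹) x' le_rfl
        hPstSyl hRhSyl hu1h hu1hx hx'Pst
      -- w1 ∈ ZC W
      have hw1Pst : w1 ∈ Pst := ZC_le _ hw1Z
      have hw1norm : w1 ∈ Subgroup.normalizer T := by
        rw [Subgroup.mem_normalizer_iff]
        intro a
        constructor
        · intro ha
          have hcomm := (mem_ZC_iff.mp hw1Z).2 a (hTPst ha)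
          have e : w1 * a * w1⁻¹ = a := by
            rw [← hcomm]
            group
          rwa [e]
        · intro ha
          have hcomm := (mem_ZC_iff.mp hw1Z).2 _ (hTPst ha)
          have e : a = w1 * a * w1⁻¹ := by
            calc a = w1⁻¹ * ((w1 * a * w1⁻¹) * w1) := by group
              _ = w1⁻¹ * (w1 * (w1 * a * w1⁻¹)) := by rw [hcomm]
              _ = w1 * a * w1⁻¹ := by group
          rw [e]
          exact ha
      have hw1Nn : w1 ∈ Nn := ⟨hw1norm, hPstSyl.le hw1Pst⟩
      have hPstNn : Pst ⊓ Nn = W :=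
        hWSyl.max (Pst ⊓ Nn) (hPstSyl.pg.to_le inf_le_left) (le_inf hWPst hWSyl.le)
          inf_le_right
      have hw1W : w1 ∈ W := hPstNn ▸ (⟨hw1Pst, hw1Nn⟩ : w1 ∈ Pst ⊓ Nn)
      have hw1ZW : w1 ∈ ZC W :=
        mem_ZC_iff.mpr ⟨hw1W, fun b hb => (mem_ZC_iff.mp hw1Z).2 b (hWPst hb)⟩
      have hWhSyl : IsSyl p Nn (cj h⁻¹ W) := cj_isSyl_of_mem hWSyl (inv_mem hhNn)
      have hwh1 : h⁻¹ * w1 * h ∈ ZC (cj h⁻¹ W) := by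
        rw [← cj_ZC, mem_cj]
        have e : (h⁻¹)⁻¹ * (h⁻¹ * w1 * h) * h⁻¹ = w1 := by group
        rw [e]
        exact hw1ZW
      have hwh1x : (h⁻¹ * w1 * h) ^ p ^ nn = x := by
        have e1 := conjg_pow h⁻¹ w1 (p ^ nn)
        rw [inv_inv] at e1
        rw [e1, hw1x, hx']
        group
      have hxW : x ∈ W := hTW hxT
      have hNnlt : Nat.card Nn < Nat.card H := card_lt_of_lt' (lt_of_le_of_ne hNnH hNH)
      have hcardWG : Nat.card W ≤ Nat.card G := Subgroup.card_le_card_group _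
      have hcard1' : 1 ≤ Nat.card ↥(Subgroup.centralizer {x} ⊓ W) := Nat.card_pos
      have hmul2 : Nat.card Nn * Nat.card G + Nat.card G ≤ Nat.card H * Nat.card G := by
        calc Nat.card Nn * Nat.card G + Nat.card G = (Nat.card Nn + 1) * Nat.card G := by ring
          _ ≤ Nat.card H * Nat.card G := Nat.mul_le_mul_right _ (by omega)
      have hmeas2 : Nat.card Nn * Nat.card G
          + (Nat.card W - Nat.card ↥(Subgroup.centralizer {x} ⊓ W)) < M := by omega
      obtain ⟨v, hvZW, hvx⟩ := IH _ hmeas2 Nn W (cj h⁻¹ W) (h⁻¹ * w1 * h) x le_rfl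
        hWSyl hWhSyl hwh1 hwh1x hxW
      exfalso
      obtain ⟨y, hyN1, hyT⟩ := SetLike.exists_of_lt hTltN1
      apply hyT
      apply Subgroup.mem_inf.mpr
      refine ⟨?_, (Subgroup.mem_inf.mp hyN1).2⟩
      apply Subgroup.mem_centralizer_iff.mpr
      intro hh hhh
      rw [Set.mem_singleton_iff] at hhh
      subst hhh
      have hyW : y ∈ W := hN1W hyN1
      have hcomm : Commute y v := (mem_ZC_iff.mp hvZW).2 y hyW
      have hfin := hcomm.pow_right (p ^ nn)
      rw [hvx] at hfin
      exact hfin.symm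

end Star
section Glue

open Pointwise

variable {G : Type*} [Group G] [Finite G]

lemma map_center_eq_ZC (K : Subgroup G) :
    (Subgroup.center ↥K).map K.subtype = ZC K := by
  ext a
  rw [mem_ZC_iff]
  constructor
  · rintro ⟨z, hz, rfl⟩
    refine ⟨z.2, ?_⟩
    intro b hb
    have := (Subgroup.mem_center_iff.mp hz) ⟨b, hb⟩
    exact congrArg Subtype.val this
  · rintro ⟨haK, hcomm⟩
    refine ⟨⟨a, haK⟩, ?_, rfl⟩
    show (⟨a, haK⟩ : ↥K) ∈ Subgroup.center ↥K
    rw [Subgroup.mem_center_iff]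
    intro g
    ext
    exact hcomm g.1 g.2

lemma ZC_commute {K : Subgroup G} {a b : G} (ha : a ∈ ZC K) (hb : b ∈ ZC K) :
    Commute a b := (mem_ZC_iff.mp hb).2 a (ZC_le _ ha)

lemma mho_ZC_mem_iff (K : Subgroup G) (m : ℕ) {a : G} :
    a ∈ Subgroup.closure ((fun z => z ^ m) '' (ZC K : Set G)) ↔ ∃ z ∈ ZC K, z ^ m = a := by
  have himage : ∃ S : Subgroup G, (S : Set G) = (fun z => z ^ m) '' (ZC K : Set G) := by
    refine ⟨{ carrier := (fun z => z ^ m) '' (ZC K : Set G)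
              one_mem' := ⟨1, one_mem _, one_pow m⟩
              mul_mem' := ?_
              inv_mem' := ?_ }, rfl⟩
    · rintro a b ⟨z1, hz1, rfl⟩ ⟨z2, hz2, rfl⟩
      exact ⟨z1 * z2, mul_mem hz1 hz2, by simpa using ((ZC_commute hz1 hz2).mul_pow m)⟩
    · rintro a ⟨z, hz, rfl⟩
      exact ⟨z⁻¹, inv_mem hz, by simpa using inv_pow z m⟩
  obtain ⟨S, hS⟩ := himage
  have hcl : Subgroup.closure ((fun z => z ^ m) '' (ZC K : Set G)) = S := by
    rw [← hS, Subgroup.closure_eq]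
  rw [hcl]
  constructor
  · intro haS
    have : a ∈ (S : Set G) := haS
    rw [hS] at this
    obtain ⟨z, hz, hza⟩ := this
    exact ⟨z, hz, hza⟩
  · rintro ⟨z, hz, rfl⟩
    have : z ^ m ∈ (S : Set G) := by
      rw [hS]
      exact ⟨z, hz, rfl⟩
    exact this

lemma HB_of_sylow {p nn : ℕ} (hp : p.Prime) (P : Sylow p G)
    (hclass : upperCentralSeries ↥(P : Subgroup G) (nn * (p - 1) + 1) = ⊤) :
    ∀ K : Subgroup G, IsPGroup p K →
      lowerCentralSeries (⊤ : Subgroup ↥K) (nn * (p - 1) + 1) = ⊥ := by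
  intro K hK
  haveI : Fact p.Prime := ⟨hp⟩
  haveI : Group.IsNilpotent ↥(P : Subgroup G) := ⟨⟨_, hclass⟩⟩
  have hclassle : Group.nilpotencyClass ↥(P : Subgroup G) ≤ nn * (p - 1) + 1 :=
    Subgroup.upperCentralSeries_eq_top_iff_nilpotencyClass_le.mp hclass
  have hlcsP : lowerCentralSeries (⊤ : Subgroup ↥(P : Subgroup G)) (nn * (p - 1) + 1) = ⊥ :=
    Subgroup.lowerCentralSeries_eq_bot_iff_nilpotencyClass_le.mpr hclassle
  obtain ⟨Q, hKQ⟩ := hK.exists_le_sylow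
  obtain ⟨g, hg⟩ := MulAction.exists_smul_eq G P Q
  have hmem : ∀ k : G, k ∈ K → g⁻¹ * k * g ∈ (P : Subgroup G) := by
    intro k hk
    have hkQ : k ∈ (Q : Subgroup G) := hKQ hk
    rw [← hg] at hkQ
    have : k ∈ MulAut.conj g • (P : Subgroup G) := hkQ
    rwa [Subgroup.mem_pointwise_smul_iff_inv_smul_mem, MulAut.smul_def,
      MulAut.conj_inv_apply] at this
  let f : ↥K →* ↥(P : Subgroup G) :=
    MonoidHom.mk' (fun k => ⟨g⁻¹ * (k : G) * g, hmem k k.2⟩)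
      (by
        intro a b
        ext
        show g⁻¹ * (↑a * ↑b) * g = (g⁻¹ * ↑a * g) * (g⁻¹ * ↑b * g)
        group)
  have hfinj : Function.Injective f := by
    intro a b hab
    have h1 : g⁻¹ * (a : G) * g = g⁻¹ * (b : G) * g := congrArg Subtype.val hab
    have h2 : (a : G) = b := by
      have := congrArg (fun t => g * t * g⁻¹) h1
      simpa [mul_assoc] using this
    exact Subtype.ext h2
  exact lcs_bot_of_injective f hfinj hlcsP

end Glue

end SCaux

open SCaux

/-- If a Sylow `p`-subgroup `P` of a finite group `G` has nilpotence class at most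
`n(p-1)+1`, then `℧ⁿ(Z(P))` is strongly closed in `P` with respect to `G`. -/
theorem mho_center_stronglyClosed (p n : ℕ) (hp : p.Prime)
    (G : Type*) [Group G] [Finite G] (P : Sylow p G)
    (hclass : upperCentralSeries ↥(P : Subgroup G) (n * (p - 1) + 1) = ⊤) :
    IsStronglyClosed
      (mho (p ^ n) ((Subgroup.center ↥(P : Subgroup G)).map (P : Subgroup G).subtype))
      (P : Subgroup G) := by
  intro g a haA hmemP
  set P₀ := (P : Subgroup G) with hP₀
  have HB := HB_of_sylow hp P hclass
  rw [mho, map_center_eq_ZC] at haA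
  obtain ⟨z, hz, hza⟩ := (mho_ZC_mem_iff P₀ (p ^ n)).mp haA
  set x := g⁻¹ * a * g with hx
  have hSP : IsSyl p ⊤ P₀ := ⟨le_top, P.2, fun K' h1 h2 _ => P.3 h1 h2⟩
  have hSQ : IsSyl p ⊤ (cj g⁻¹ P₀) := cj_isSyl_of_mem hSP trivial
  have hz' : g⁻¹ * z * g ∈ ZC (cj g⁻¹ P₀) := by
    rw [← cj_ZC, mem_cj]
    have e : (g⁻¹)⁻¹ * (g⁻¹ * z * g) * g⁻¹ = z := by group
    rw [e]
    exact hz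
  have hzx : (g⁻¹ * z * g) ^ p ^ n = x := by
    have e1 := conjg_pow g⁻¹ z (p ^ n)
    rw [inv_inv] at e1
    rw [e1, hza]
  obtain ⟨w, hwZ, hwx⟩ := starThm hp HB
    (Nat.card ↥(⊤ : Subgroup G) * Nat.card G
      + (Nat.card P₀ - Nat.card ↥(Subgroup.centralizer {x} ⊓ P₀)))
    ⊤ P₀ (cj g⁻¹ P₀) (g⁻¹ * z * g) x le_rfl hSP hSQ hz' hzx hmemP
  rw [mho, map_center_eq_ZC, mho_ZC_mem_iff]
  exact ⟨w, hwZ, hwx⟩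
end

section
/- Let p be a prime, n a nonnegative integer, and let P be a nonabelian Sylow p-subgroup of a finite group G. Suppose that P has nilpotence class at most n(p-1)+1 and that G has no nontrivial strongly closed abelian p-subgroup (i.e., no nontrivial abelian subgroup of P is strongly closed in P with respect to G). Then Z(P) has exponent at most p^n, i.e., x^{p^n} = 1 for every x ∈ Z(P). -/
open Finset in
private lemma ring_key {S : Type*} [CommRing S] {p : ℕ} (hp : p.Prime) (n : ℕ) (t : S)
    (ht : t ^ (n * (p - 1) + 1) = 0) (hs : (1 + t) ^ p = 1) :
    (p : S) ^ n * t = 0 := by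
  obtain ⟨m, rfl⟩ : ∃ m, p = m + 2 := ⟨p - 2, by have := hp.two_le; omega⟩
  have hB : m + 2 - 1 = m + 1 := rfl
  rw [hB] at ht
  have h0 : ∑ k ∈ range (m + 3), t ^ k * ((m + 2).choose k : S) = 1 := by
    have := add_pow t 1 (m + 2)
    simp only [one_pow, mul_one] at this
    rw [← this, add_comm]; exact hs
  have h1 : ∑ k ∈ range (m + 2), t ^ (k + 1) * ((m + 2).choose (k + 1) : S) = 0 := by
    have h0' := h0
    rw [Finset.sum_range_succ'] at h0'
    simp only [pow_zero, Nat.choose_zero_right, Nat.cast_one, one_mul] at h0'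
    rwa [add_eq_right] at h0'
  have h2 : (∑ k ∈ range (m + 1), t ^ (k + 1) * ((m + 2).choose (k + 1) : S)) + t ^ (m + 2) = 0 := by
    have h1' := h1
    rw [Finset.sum_range_succ] at h1'
    simpa using h1'
  set c : ℕ → ℕ := fun j => (m + 2).choose j / (m + 2) with hc
  have hdvd : ∀ k, k < m + 1 → (m + 2) * c (k + 1) = (m + 2).choose (k + 1) := by
    intro k hk
    exact Nat.mul_div_cancel' (hp.dvd_choose_self (Nat.succ_ne_zero k) (by omega))
  set F : S := ∑ k ∈ range (m + 1), (c (k + 1) : S) * t ^ k with hF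
  have h3 : ((m : S) + 2) * t * F + t ^ (m + 2) = 0 := by
    rw [← h2]
    congr 1
    rw [Finset.mul_sum]
    apply Finset.sum_congr rfl
    intro k hk
    rw [Finset.mem_range] at hk
    rw [← hdvd k hk]
    push_cast
    ring
  have hc1 : c 1 = 1 := by
    simp only [hc, Nat.choose_one_right]
    exact Nat.div_self (by omega)
  set gg : S := ∑ k ∈ range m, (c (k + 2) : S) * t ^ k with hgg
  set N := t * gg with hNdef
  have h4 : F = 1 + N := by
    rw [hF, Finset.sum_range_succ']
    rw [hc1]
    simp only [Nat.cast_one, pow_zero, mul_one]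
    rw [hNdef, hgg, Finset.mul_sum, add_comm]
    congr 1
    apply Finset.sum_congr rfl
    intro k _
    ring
  have hN : N ^ (n * (m + 1) + 1) = 0 := by
    rw [hNdef, mul_pow, ht, zero_mul]
  set w : S := ∑ i ∈ range (n * (m + 1) + 1), (-N) ^ i with hw
  have hFw : F * w = 1 := by
    have hg := geom_sum_mul (-N) (n * (m + 1) + 1)
    have hNB : (-N) ^ (n * (m + 1) + 1) = 0 := by rw [neg_pow, hN, mul_zero]
    rw [hNB] at hg
    rw [h4]
    calc (1 + N) * w = -(w * (-N - 1)) := by ring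
    _ = -(0 - 1) := by rw [← hw] at hg; rw [hg]
    _ = 1 := by ring
  have h5 : ((m : S) + 2) * t = (-(t ^ (m + 1) * w)) * t := by
    linear_combination w * h3 - ((m : S) + 2) * t * hFw
  set r : S := -(t ^ (m + 1) * w) with hr
  have h6 : ∀ j : ℕ, ((m : S) + 2) ^ j * t = r ^ j * t := by
    intro j
    induction j with
    | zero => simp
    | succ j ih =>
      calc ((m : S) + 2) ^ (j + 1) * t = ((m : S) + 2) ^ j * (((m : S) + 2) * t) := by ring
      _ = ((m : S) + 2) ^ j * (r * t) := by rw [h5]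
      _ = r * (((m : S) + 2) ^ j * t) := by ring
      _ = r * (r ^ j * t) := by rw [ih]
      _ = r ^ (j + 1) * t := by ring
  have e1 : (m + 1) * n + 1 = n * (m + 1) + 1 := by ring
  have h7 : r ^ n * t = 0 := by
    calc r ^ n * t = (-1 : S) ^ n * ((t ^ (m + 1)) ^ n * w ^ n) * t := by
          rw [hr, neg_pow, mul_pow]
      _ = (-1 : S) ^ n * w ^ n * (t ^ ((m + 1) * n) * t) := by rw [← pow_mul]; ring
      _ = (-1 : S) ^ n * w ^ n * t ^ ((m + 1) * n + 1) := by rw [← pow_succ]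
      _ = (-1 : S) ^ n * w ^ n * t ^ (n * (m + 1) + 1) := by rw [e1]
      _ = 0 := by rw [ht, mul_zero]
  have h8 := h6 n
  push_cast
  rw [h8, h7]

open Polynomial in
private lemma end_key {A : Type*} [Ring A] {p : ℕ} (hp : p.Prime) (n : ℕ) (t : A)
    (ht : t ^ (n * (p - 1) + 1) = 0) (hs : (1 + t) ^ p = 1) :
    (p : A) ^ n * t = 0 := by
  set B := n * (p - 1) + 1 with hB
  set I : Ideal (Polynomial ℤ) := Ideal.span {(X : ℤ[X]) ^ B, (1 + X : ℤ[X]) ^ p - 1} with hI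
  have hmem : ((p : ℤ[X]) ^ n * X) ∈ I := by
    rw [← Ideal.Quotient.eq_zero_iff_mem]
    set x : ℤ[X] ⧸ I := Ideal.Quotient.mk I X with hx
    have hx1 : x ^ B = 0 := by
      rw [hx, ← map_pow, Ideal.Quotient.eq_zero_iff_mem]
      exact Ideal.subset_span (by simp)
    have hx2 : (1 + x) ^ p = 1 := by
      have h0 : (Ideal.Quotient.mk I) ((1 + X : ℤ[X]) ^ p - 1) = 0 :=
        Ideal.Quotient.eq_zero_iff_mem.mpr (Ideal.subset_span (by simp))
      rw [map_sub, map_pow, map_add, map_one, sub_eq_zero] at h0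
      exact h0
    have hk := ring_key hp n x hx1 hx2
    rw [map_mul, map_pow, map_natCast]
    exact hk
  obtain ⟨a, b, hab⟩ := Ideal.mem_span_pair.mp hmem
  have happ := congrArg (Polynomial.aeval t) hab
  simp only [map_add, map_mul, map_pow, aeval_X, map_sub, map_one, map_natCast] at happ
  rw [← happ, ht, hs]
  simp

private lemma quot_order_p {p : ℕ} (hp : p.Prime) {Q : Type*} [Group Q] :
    ∀ (k : ℕ) (g : Q), g ≠ 1 → g ^ p ^ k = 1 → ∃ v : Q, v ≠ 1 ∧ v ^ p = 1 := by
  intro k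
  induction k with
  | zero => intro g hg h1; simp at h1; exact absurd h1 hg
  | succ k ih =>
    intro g hg h1
    by_cases hgp : g ^ p = 1
    · exact ⟨g, hg, hgp⟩
    · refine ih (g ^ p) hgp ?_
      rw [← pow_mul, ← pow_succ']
      exact h1

open scoped IsMulCommutative commutatorElement in
private lemma P2_lemma {p n : ℕ} (hp : p.Prime) {H : Type*} [Group H] [Finite H]
    (hH : IsPGroup p H) (hcl : Subgroup.lowerCentralSeries (⊤ : Subgroup H) (n * (p - 1) + 1) = ⊥)
    (y : H) (hyb : ∀ w : H, w * y ^ p ^ n = y ^ p ^ n * w → w * y = y * w) :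
    ∀ w : H, w * y ^ p ^ n = y ^ p ^ n * w := by
  by_contra hcon
  push_neg at hcon
  obtain ⟨w₀, hw₀⟩ := hcon
  set b := y ^ p ^ n with hb
  set D := Subgroup.centralizer ({b} : Set H) with hD
  have hbD : b ∈ D := by
    rw [hD, Subgroup.mem_centralizer_iff]; rintro h rfl; rfl
  have hyD : y ∈ D := by
    rw [hD, Subgroup.mem_centralizer_iff]; rintro h rfl
    exact ((Commute.refl y).pow_right (p ^ n)).symm
  have hycD : ∀ d ∈ D, y * d = d * y := by
    intro d hd
    have : d * b = b * d := by
      rw [hD, Subgroup.mem_centralizer_iff] at hd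
      exact (hd b rfl).symm
    exact (hyb d this).symm
  have hDtop : D ≠ ⊤ := by
    intro h
    apply hw₀
    have : w₀ ∈ D := h ▸ Subgroup.mem_top w₀
    rw [hD, Subgroup.mem_centralizer_iff] at this
    exact (this b rfl).symm
  haveI hnil : Group.IsNilpotent H := nilpotent_iff_lowerCentralSeries.mpr ⟨_, hcl⟩
  have hDlt : D < Subgroup.normalizer (D : Set H) := normalizerCondition_of_isNilpotent D (lt_top_iff_ne_top.mpr hDtop)
  set ND := Subgroup.normalizer (D : Set H) with hND
  set D' : Subgroup ND := D.subgroupOf ND with hD'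
  haveI : D'.Normal := Subgroup.normal_in_normalizer
  have hD'top : D' ≠ ⊤ := by
    rw [hD', Ne, Subgroup.subgroupOf_eq_top]
    exact hDlt.not_ge
  obtain ⟨x, hx⟩ : ∃ x : ND, x ∉ D' := by
    by_contra hall
    push_neg at hall
    exact hD'top ((Subgroup.eq_top_iff' D').mpr hall)
  have hQp : IsPGroup p (ND ⧸ D') := (hH.to_subgroup ND).to_quotient D'
  obtain ⟨k, hk⟩ := hQp (QuotientGroup.mk x)
  obtain ⟨v, hv1, hvp⟩ := quot_order_p hp k (QuotientGroup.mk x)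
    (by rw [Ne, QuotientGroup.eq_one_iff]; exact hx) hk
  obtain ⟨u', hu'⟩ := QuotientGroup.mk_surjective v
  have hu'notD : u' ∉ D' := by
    intro h
    exact hv1 (hu' ▸ (QuotientGroup.eq_one_iff u').mpr h)
  have hu'p : u' ^ p ∈ D' := by
    rw [← QuotientGroup.eq_one_iff]
    have : ((u' ^ p : ND) : ND ⧸ D') = v ^ p := by rw [← hu']; rfl
    rw [this, hvp]
  set u : H := (u' : H) with hu
  have huN : u ∈ ND := u'.2
  have hunotD : u ∉ D := by
    intro h
    exact hu'notD (by rwa [hD', Subgroup.mem_subgroupOf])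
  have hupD : u ^ p ∈ D := by
    have := hu'p
    rw [hD', Subgroup.mem_subgroupOf] at this
    exact_mod_cast this
  -- conjugation stability of "central in D" elements
  have hconjD : ∀ g : H, g ∈ ND → ∀ z : H, z ∈ D → (∀ d ∈ D, z * d = d * z) →
      (g⁻¹ * z * g ∈ D ∧ ∀ d ∈ D, (g⁻¹ * z * g) * d = d * (g⁻¹ * z * g)) := by
    intro g hg z hz hzc
    have hgn := Subgroup.mem_normalizer_iff.mp hg
    constructor
    · have : g * (g⁻¹ * z * g) * g⁻¹ = z := by group
      exact (hgn (g⁻¹ * z * g)).mpr (by rw [this]; exact hz)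
    · intro d hd
      have hdg : g * d * g⁻¹ ∈ D := (hgn d).mp hd
      have h2 := hzc (g * d * g⁻¹) hdg
      calc (g⁻¹ * z * g) * d = g⁻¹ * (z * (g * d * g⁻¹)) * g := by group
        _ = g⁻¹ * ((g * d * g⁻¹) * z) * g := by rw [h2]
        _ = d * (g⁻¹ * z * g) := by group
  set yc : ℕ → H := fun i => (u ^ i)⁻¹ * y * (u ^ i) with hyc
  have hyc_zd : ∀ i, yc i ∈ D ∧ ∀ d ∈ D, yc i * d = d * yc i := by
    intro i
    exact hconjD (u ^ i) (pow_mem huN i) y hyD hycD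
  have hyc_succ : ∀ i, u⁻¹ * yc i * u = yc (i + 1) := by
    intro i
    show u⁻¹ * ((u ^ i)⁻¹ * y * u ^ i) * u = (u ^ (i + 1))⁻¹ * y * u ^ (i + 1)
    rw [pow_succ]
    group
  have hyp_u : u ^ p * y = y * u ^ p := (hycD (u ^ p) hupD).symm
  have hyc_per : yc p = y := by
    show (u ^ p)⁻¹ * y * u ^ p = y
    rw [mul_assoc, ← hyp_u, inv_mul_cancel_left]
  set M : Subgroup H := Subgroup.closure (Set.range yc) with hM
  have hy0 : yc 0 = y := by simp [hyc]
  have hyM : y ∈ M := hy0 ▸ Subgroup.subset_closure ⟨0, rfl⟩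
  have hM_zd : ∀ m ∈ M, m ∈ D ∧ ∀ d ∈ D, m * d = d * m := by
    have hsub : Set.range yc ⊆ ↑(D ⊓ Subgroup.centralizer (D : Set H)) := by
      rintro _ ⟨i, rfl⟩
      obtain ⟨h1, h2⟩ := hyc_zd i
      rw [SetLike.mem_coe, Subgroup.mem_inf]
      exact ⟨h1, by rw [Subgroup.mem_centralizer_iff]; intro h hh; exact (h2 h hh).symm⟩
    have hMle : M ≤ D ⊓ Subgroup.centralizer (D : Set H) := by
      rw [hM]; exact (Subgroup.closure_le _).mpr hsub
    intro m hm
    obtain ⟨hmD, hmC⟩ := Subgroup.mem_inf.mp (hMle hm)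
    exact ⟨hmD, fun d hd => (Subgroup.mem_centralizer_iff.mp hmC d hd).symm⟩
  haveI hMcomm : IsMulCommutative M := by
    constructor; constructor
    intro a b
    apply Subtype.ext
    obtain ⟨_, haC⟩ := hM_zd (a : H) a.2
    obtain ⟨hbD, _⟩ := hM_zd (b : H) b.2
    exact haC (b : H) hbD
  have hstab : ∀ m ∈ M, u⁻¹ * m * u ∈ M := by
    have hle : M ≤ M.comap (MulAut.conj u⁻¹).toMonoidHom := by
      rw [hM, Subgroup.closure_le]
      rintro _ ⟨i, rfl⟩
      show (MulAut.conj u⁻¹) (yc i) ∈ M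
      have : (MulAut.conj u⁻¹) (yc i) = u⁻¹ * yc i * u := by
        simp [MulAut.conj_apply]
      rw [this, hyc_succ i]
      exact Subgroup.subset_closure ⟨i + 1, rfl⟩
    intro m hm
    have := Subgroup.mem_comap.mp (hle hm)
    simpa [MulAut.conj_apply, mul_assoc] using this
  set σm : ↥M →* ↥M :=
    { toFun := fun m => ⟨u⁻¹ * (m : H) * u, hstab (m : H) m.2⟩
      map_one' := by apply Subtype.ext; simp
      map_mul' := by
        intro a c
        apply Subtype.ext
        show u⁻¹ * (↑a * ↑c) * u = (u⁻¹ * ↑a * u) * (u⁻¹ * ↑c * u)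
        group } with hσm
  set σ : AddMonoid.End (Additive ↥M) := MonoidHom.toAdditive σm with hσ
  set tt : AddMonoid.End (Additive ↥M) := σ - 1 with htt
  set val : Additive ↥M → H := fun a => ((Additive.toMul a : ↥M) : H) with hval
  have hval_inj : Function.Injective val := by
    intro a c hac
    exact Additive.toMul.injective (Subtype.ext hac)
  have hval_σ : ∀ a, val (σ a) = u⁻¹ * val a * u := fun a => rfl
  have hval_add : ∀ a c, val (a + c) = val a * val c := fun a c => rfl
  have hval_zero : val 0 = 1 := rfl
  have hval_neg : ∀ a, val (-a) = (val a)⁻¹ := fun a => rfl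
  have hval_sub : ∀ a c, val (a - c) = val a * (val c)⁻¹ := by
    intro a c; rw [sub_eq_add_neg, hval_add, hval_neg]
  have hval_mem : ∀ a, val a ∈ M := fun a => (Additive.toMul a).2
  have hval_t : ∀ a, val (tt a) = (u⁻¹ * val a * u) * (val a)⁻¹ := by
    intro a
    have h1 : tt a = σ a - (1 : AddMonoid.End (Additive ↥M)) a := by
      rw [htt]; rfl
    rw [h1, AddMonoid.End.one_apply, hval_sub, hval_σ]
  have hpow_val : ∀ (k : ℕ) (a : Additive ↥M), val ((σ ^ k) a) = (u ^ k)⁻¹ * val a * u ^ k := by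
    intro k
    induction k with
    | zero => intro a; rw [pow_zero, AddMonoid.End.one_apply]; simp
    | succ k ih =>
      intro a
      rw [pow_succ']
      have h1 : (σ * σ ^ k) a = σ ((σ ^ k) a) := rfl
      rw [h1, hval_σ, ih, pow_succ]
      group
  have hσp : σ ^ p = 1 := by
    apply DFunLike.ext
    intro a
    apply hval_inj
    rw [hpow_val p a, AddMonoid.End.one_apply]
    obtain ⟨_, hcomm⟩ := hM_zd (val a) (hval_mem a)
    have h2 := hcomm (u ^ p) hupD
    rw [mul_assoc, h2, inv_mul_cancel_left]
  have ht_val : ∀ (k : ℕ) (a : Additive ↥M), val ((tt ^ k) a) ∈ Subgroup.lowerCentralSeries (⊤ : Subgroup H) k := by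
    intro k
    induction k with
    | zero =>
      intro a; rw [pow_zero, AddMonoid.End.one_apply, lowerCentralSeries_zero]; trivial
    | succ k ih =>
      intro a
      rw [pow_succ']
      have h1 : (tt * tt ^ k) a = tt ((tt ^ k) a) := rfl
      rw [h1, hval_t, lowerCentralSeries_succ]
      have heq : (u⁻¹ * val ((tt ^ k) a) * u) * (val ((tt ^ k) a))⁻¹
          = ⁅val ((tt ^ k) a), u⁻¹⁆⁻¹ := by
        rw [← commutatorElement_inv, commutatorElement_def]; group
      rw [heq]
      exact Subgroup.inv_mem _
        (Subgroup.commutator_mem_commutator (ih a) (Subgroup.mem_top u⁻¹))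
  have htB : tt ^ (n * (p - 1) + 1) = 0 := by
    apply DFunLike.ext
    intro a
    apply hval_inj
    have h3 := ht_val (n * (p - 1) + 1) a
    rw [hcl, Subgroup.mem_bot] at h3
    rw [h3]
    rfl
  have h1t : (1 : AddMonoid.End (Additive ↥M)) + tt = σ := by rw [htt]; abel
  have hkey := end_key hp n tt htB (by rw [h1t, hσp])
  have hbM : b ∈ M := hb ▸ pow_mem hyM (p ^ n)
  set ya : Additive ↥M := Additive.ofMul (⟨y, hyM⟩ : ↥M) with hya
  set ba : Additive ↥M := Additive.ofMul (⟨b, hbM⟩ : ↥M) with hba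
  have hband : ba = (p ^ n) • ya := by
    apply hval_inj
    show b = val ((p ^ n) • ya)
    have h4 : val ((p ^ n) • ya) = ((Additive.toMul ((p ^ n) • ya) : ↥M) : H) := rfl
    rw [h4, toMul_nsmul]
    show b = ((((⟨y, hyM⟩ : ↥M)) ^ p ^ n : ↥M) : H)
    rw [SubmonoidClass.coe_pow]
  have happ := congrArg (fun f : AddMonoid.End (Additive ↥M) => f ya) hkey
  have hL : ((p : AddMonoid.End (Additive ↥M)) ^ n * tt) ya = (p ^ n : ℕ) • (tt ya) := by
    have h1 : ((p : AddMonoid.End (Additive ↥M)) ^ n * tt) ya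
        = ((p : AddMonoid.End (Additive ↥M)) ^ n) (tt ya) := rfl
    rw [h1, ← Nat.cast_pow, AddMonoid.End.natCast_apply]
  have hR : (0 : AddMonoid.End (Additive ↥M)) ya = 0 := rfl
  rw [hL, hR] at happ
  have htba : tt ba = 0 := by
    rw [hband, map_nsmul, happ]
  have h5 := congrArg val htba
  rw [hval_t] at h5
  have hvb : val ba = b := rfl
  rw [hvb, hval_zero] at h5
  have h6 : u⁻¹ * b * u = b := mul_inv_eq_one.mp h5
  apply hunotD
  rw [hD, Subgroup.mem_centralizer_iff]
  rintro h rfl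
  have h7 := congrArg (fun z => u * z) h6
  calc b * u = u * (u⁻¹ * b * u) := by group
    _ = u * b := by rw [h6]


section Fusion

variable {p n : ℕ} {G : Type*} [Group G] [Finite G]

private def ZC (H : Subgroup G) : Subgroup G := Subgroup.centralizer (H : Set G) ⊓ H

private lemma mem_ZC_iff {H : Subgroup G} {g : G} :
    g ∈ ZC H ↔ (∀ h ∈ H, h * g = g * h) ∧ g ∈ H := by
  rw [ZC, Subgroup.mem_inf, Subgroup.mem_centralizer_iff]
  simp only [SetLike.mem_coe]

private def Om (p n : ℕ) (H : Subgroup G) : Subgroup G where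
  carrier := {g | ∃ y ∈ ZC H, y ^ p ^ n = g}
  one_mem' := ⟨1, Subgroup.one_mem _, one_pow _⟩
  mul_mem' := by
    rintro a c ⟨y1, hy1, rfl⟩ ⟨y2, hy2, rfl⟩
    refine ⟨y1 * y2, Subgroup.mul_mem _ hy1 hy2, ?_⟩
    have hcomm : Commute y1 y2 :=
      ((mem_ZC_iff.mp hy1).1 y2 (mem_ZC_iff.mp hy2).2).symm
    rw [hcomm.mul_pow]
  inv_mem' := by
    rintro a ⟨y1, hy1, rfl⟩
    exact ⟨y1⁻¹, Subgroup.inv_mem _ hy1, by rw [inv_pow]⟩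

private lemma mem_Om_iff {H : Subgroup G} {g : G} :
    g ∈ Om p n H ↔ ∃ y ∈ ZC H, y ^ p ^ n = g := Iff.rfl

private lemma zc_le {H : Subgroup G} : ZC H ≤ H := inf_le_right

private lemma om_le_zc {H : Subgroup G} : Om p n H ≤ ZC H := by
  rintro _ ⟨y, hy, rfl⟩
  exact pow_mem hy _

private lemma le_centralizer_of_ZC {R : Subgroup G} {b : G} (hb : b ∈ ZC R) :
    R ≤ Subgroup.centralizer {b} := by
  intro w hw
  rw [Subgroup.mem_centralizer_iff]
  rintro h rfl
  exact ((mem_ZC_iff.mp hb).1 w hw).symm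

private lemma mem_subtype_iff {G : Type*} [Group G] {p : ℕ} {N : Subgroup G} {R : Sylow p G}
    (h : ↑R ≤ N) {x : ↥N} : x ∈ R.subtype h ↔ (x : G) ∈ R := Iff.rfl

private lemma mem_smul_iff {G : Type*} [Group G] {p : ℕ} {c x : G} {R : Sylow p G} :
    x ∈ ((c • R : Sylow p G) : Subgroup G) ↔ c⁻¹ * x * c ∈ R := by
  rw [Sylow.coe_subgroup_smul, Subgroup.mem_pointwise_smul_iff_inv_smul_mem]
  have h2 : (MulAut.conj c)⁻¹ • x = c⁻¹ * x * c := by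
    have h3 : (MulAut.conj c)⁻¹ = MulAut.conj c⁻¹ := by rw [← map_inv]
    rw [h3]
    show MulAut.conj c⁻¹ x = c⁻¹ * x * c
    rw [MulAut.conj_apply, inv_inv]
  rw [h2]
  exact Iff.rfl

private lemma ZC_conj {R : Sylow p G} {c y : G} (hy : y ∈ ZC ↑R) :
    c * y * c⁻¹ ∈ ZC ↑(c • R : Sylow p G) := by
  obtain ⟨hyc, hyR⟩ := mem_ZC_iff.mp hy
  rw [mem_ZC_iff]
  constructor
  · intro h hh
    have hh' : c⁻¹ * h * c ∈ R := mem_smul_iff.mp hh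
    have h3 := hyc (c⁻¹ * h * c) hh'
    calc h * (c * y * c⁻¹) = c * ((c⁻¹ * h * c) * y) * c⁻¹ := by group
      _ = c * (y * (c⁻¹ * h * c)) * c⁻¹ := by rw [h3]
      _ = (c * y * c⁻¹) * h := by group
  · apply mem_smul_iff.mpr
    have h4 : c⁻¹ * (c * y * c⁻¹) * c = y := by group
    rw [h4]
    exact hyR

private lemma sylow_step [Fact p.Prime] {K : Subgroup G} (R : Sylow p G) (hRK : ↑R ≤ K)
    (X : Subgroup G) (hX : IsPGroup p X) (hXK : X ≤ K) :
    ∃ c ∈ K, X ≤ ((c • R : Sylow p G) : Subgroup G) := by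
  haveI : Finite (Sylow p G) :=
    Finite.of_injective (fun P => (P : Set G)) (fun P Q h => by
      ext x; exact Set.ext_iff.mp h x)
  set R' : Sylow p ↥K := R.subtype hRK
  have hX' : IsPGroup p (X.subgroupOf K) := hX.comap_subtype
  obtain ⟨Q', hQ'⟩ := hX'.exists_le_sylow
  obtain ⟨c', hc'⟩ := MulAction.exists_smul_eq ↥K Q' R'
  refine ⟨(c' : G)⁻¹, Subgroup.inv_mem _ c'.2, ?_⟩
  intro x hx
  rw [mem_smul_iff, inv_inv]
  have hxK : x ∈ K := hXK hx
  have hx' : (⟨x, hxK⟩ : ↥K) ∈ Q' := hQ' (by rwa [Subgroup.mem_subgroupOf])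
  have hmem : (c' * ⟨x, hxK⟩ * c'⁻¹ : ↥K) ∈ ((c' • Q' : Sylow p ↥K) : Subgroup ↥K) := by
    apply mem_smul_iff.mpr
    have h8 : c'⁻¹ * (c' * ⟨x, hxK⟩ * c'⁻¹) * c' = (⟨x, hxK⟩ : ↥K) := by group
    rw [h8]
    exact hx'
  rw [hc'] at hmem
  exact (mem_subtype_iff hRK).mp hmem

private lemma sylow_conj_mem [Fact p.Prime] {K : Subgroup G} (R Pl : Sylow p G)
    (hRK : ↑R ≤ K) (hPK : ↑Pl ≤ K) :
    ∃ c ∈ K, ∀ x, x ∈ K → ((c⁻¹ * x * c ∈ R) ↔ x ∈ Pl) := by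
  haveI : Finite (Sylow p G) :=
    Finite.of_injective (fun P => (P : Set G)) (fun P Q h => by
      ext x; exact Set.ext_iff.mp h x)
  set R' : Sylow p ↥K := R.subtype hRK
  set P' : Sylow p ↥K := Pl.subtype hPK
  obtain ⟨c', hc'⟩ := MulAction.exists_smul_eq ↥K R' P'
  refine ⟨(c' : G), c'.2, ?_⟩
  intro x hx
  constructor
  · intro hmem
    have hx1 : (c'⁻¹ * ⟨x, hx⟩ * c' : ↥K) ∈ R' := (mem_subtype_iff hRK).mpr hmem
    have hx2 : (⟨x, hx⟩ : ↥K) ∈ ((c' • R' : Sylow p ↥K) : Subgroup ↥K) :=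
      mem_smul_iff.mpr hx1
    rw [hc'] at hx2
    exact (mem_subtype_iff hPK).mp hx2
  · intro hmem
    have hx2 : (⟨x, hx⟩ : ↥K) ∈ ((P' : Sylow p ↥K) : Subgroup ↥K) := (mem_subtype_iff hPK).mpr hmem
    rw [← hc'] at hx2
    exact (mem_subtype_iff hRK).mp (mem_smul_iff.mp hx2)

private lemma burnside [Fact p.Prime] {Pl R : Sylow p G} {b y : G}
    (hbZ : b ∈ ZC ↑Pl) (hyR : y ∈ ZC ↑R) (hybb : y ^ p ^ n = b) : b ∈ Om p n ↑Pl := by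
  have hbZR : b ∈ ZC ↑R := hybb ▸ pow_mem hyR _
  obtain ⟨c, hcK, hiff⟩ := sylow_conj_mem R Pl (le_centralizer_of_ZC hbZR)
    (le_centralizer_of_ZC hbZ)
  set y₂ := c * y * c⁻¹ with hy₂
  have hyK : y ∈ Subgroup.centralizer {b} := le_centralizer_of_ZC hbZR (zc_le hyR)
  have hy₂K : y₂ ∈ Subgroup.centralizer {b} :=
    Subgroup.mul_mem _ (Subgroup.mul_mem _ hcK hyK) (Subgroup.inv_mem _ hcK)
  have hy₂P : y₂ ∈ Pl := by
    rw [← hiff y₂ hy₂K]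
    have h0 : c⁻¹ * y₂ * c = y := by rw [hy₂]; group
    rw [h0]
    exact zc_le hyR
  have hy₂C : ∀ h ∈ (Pl : Subgroup G), h * y₂ = y₂ * h := by
    intro h hh
    have hhK : h ∈ Subgroup.centralizer {b} := le_centralizer_of_ZC hbZ hh
    have hh' : c⁻¹ * h * c ∈ R := (hiff h hhK).mpr hh
    have h3 := (mem_ZC_iff.mp hyR).1 (c⁻¹ * h * c) hh'
    calc h * y₂ = c * ((c⁻¹ * h * c) * y) * c⁻¹ := by rw [hy₂]; group
      _ = c * (y * (c⁻¹ * h * c)) * c⁻¹ := by rw [h3]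
      _ = y₂ * h := by rw [hy₂]; group
  refine ⟨y₂, mem_ZC_iff.mpr ⟨hy₂C, hy₂P⟩, ?_⟩
  have hcb : b * c = c * b := Subgroup.mem_centralizer_iff.mp hcK b rfl
  calc y₂ ^ p ^ n = c * y ^ p ^ n * c⁻¹ := by rw [hy₂, conj_pow]
    _ = c * b * c⁻¹ := by rw [hybb]
    _ = b := by rw [← hcb]; group

private lemma exists_normalizer_elt [Fact p.Prime] {D : Subgroup G} (Pl : Sylow p G)
    (hDP : D ≤ ↑Pl) (hne : D ≠ ↑Pl) : ∃ t : G, t ∈ Pl ∧ t ∈ Subgroup.normalizer (D : Set G) ∧ t ∉ D := by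
  haveI : Group.IsNilpotent ↥(Pl : Subgroup G) := Pl.isPGroup'.isNilpotent
  set D' : Subgroup ↥(Pl : Subgroup G) := D.subgroupOf ↑Pl with hD'
  have hlt : D' < ⊤ := by
    rw [lt_top_iff_ne_top, hD', Ne, Subgroup.subgroupOf_eq_top]
    intro hle
    exact hne (le_antisymm hDP hle)
  have hcond := normalizerCondition_of_isNilpotent (G := ↥(Pl : Subgroup G)) D' hlt
  obtain ⟨t', ht'N, ht'D⟩ := SetLike.exists_of_lt hcond
  refine ⟨(t' : G), t'.2, ?_, ?_⟩
  · rw [Subgroup.mem_normalizer_iff]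
    intro h
    constructor
    · intro hh
      have hhP : h ∈ (Pl : Subgroup G) := hDP hh
      have h1 : (⟨h, hhP⟩ : ↥(Pl : Subgroup G)) ∈ D' := by
        rw [hD', Subgroup.mem_subgroupOf]; exact hh
      have h2 := (Subgroup.mem_normalizer_iff.mp ht'N ⟨h, hhP⟩).mp h1
      rw [hD', Subgroup.mem_subgroupOf] at h2
      exact h2
    · intro hh
      have hhP : (t' : G) * h * (t' : G)⁻¹ ∈ (Pl : Subgroup G) := hDP hh
      have hP : h ∈ (Pl : Subgroup G) := by
        have h3 : h = (t' : G)⁻¹ * ((t' : G) * h * (t' : G)⁻¹) * (t' : G) := by group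
        rw [h3]
        exact Subgroup.mul_mem _ (Subgroup.mul_mem _ (Subgroup.inv_mem _ t'.2) hhP) t'.2
      have h4 : (t' * ⟨h, hP⟩ * t'⁻¹ : ↥(Pl : Subgroup G)) ∈ D' := by
        rw [hD', Subgroup.mem_subgroupOf]
        exact hh
      have h5 := (Subgroup.mem_normalizer_iff.mp ht'N ⟨h, hP⟩).mpr h4
      rw [hD', Subgroup.mem_subgroupOf] at h5
      exact h5
  · intro hh
    apply ht'D
    rw [hD', Subgroup.mem_subgroupOf]
    exact hh

private lemma lcs_map_of_equiv {H K : Type*} [Group H] [Group K] (e : H ≃* K) (k : ℕ) :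
    (Subgroup.lowerCentralSeries (⊤ : Subgroup H) k).map e.toMonoidHom = Subgroup.lowerCentralSeries (⊤ : Subgroup K) k := by
  induction k with
  | zero =>
    rw [lowerCentralSeries_zero, lowerCentralSeries_zero]
    exact Subgroup.map_top_of_surjective _ e.surjective
  | succ k ih =>
    show Subgroup.map e.toMonoidHom ⁅Subgroup.lowerCentralSeries (⊤ : Subgroup H) k, ⊤⁆ = ⁅Subgroup.lowerCentralSeries (⊤ : Subgroup K) k, ⊤⁆
    rw [Subgroup.map_commutator, ih, Subgroup.map_top_of_surjective _ e.surjective]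

private lemma lcs_bot_of_equiv {H K : Type*} [Group H] [Group K] (e : H ≃* K) (k : ℕ)
    (h : Subgroup.lowerCentralSeries (⊤ : Subgroup H) k = ⊥) : Subgroup.lowerCentralSeries (⊤ : Subgroup K) k = ⊥ := by
  rw [← lcs_map_of_equiv e k, h, Subgroup.map_bot]


private lemma finite_sylow : Finite (Sylow p G) :=
  Finite.of_injective (fun P => (P : Set G)) (fun P Q h => by
    ext x; exact Set.ext_iff.mp h x)

private lemma lcs_all [Fact p.Prime] (P₀ : Sylow p G)
    (hcl₀ : Subgroup.lowerCentralSeries (⊤ : Subgroup ↥(P₀ : Subgroup G)) (n * (p - 1) + 1) = ⊥) (Q : Sylow p G) :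
    Subgroup.lowerCentralSeries (⊤ : Subgroup ↥(Q : Subgroup G)) (n * (p - 1) + 1) = ⊥ := by
  haveI : Finite (Sylow p G) := finite_sylow
  exact lcs_bot_of_equiv (Sylow.equiv P₀ Q) _ hcl₀

private lemma card_sylow_eq [Fact p.Prime] (Q1 Q2 : Sylow p G) :
    Nat.card ↥(Q1 : Subgroup G) = Nat.card ↥(Q2 : Subgroup G) := by
  haveI : Finite (Sylow p G) := finite_sylow
  exact Nat.card_congr (Sylow.equiv Q1 Q2).toEquiv

private lemma propS [Fact p.Prime] (hp : p.Prime) (P₀ : Sylow p G)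
    (hcl₀ : Subgroup.lowerCentralSeries (⊤ : Subgroup ↥(P₀ : Subgroup G)) (n * (p - 1) + 1) = ⊥) :
    ∀ (k : ℕ) (Pl R : Sylow p G) (b y : G), b ∈ Pl → y ∈ ZC ↑R → y ^ p ^ n = b →
      Nat.card ↥(Pl : Subgroup G) -
        Nat.card ↥(Subgroup.centralizer {b} ⊓ (Pl : Subgroup G)) ≤ k →
      b ∈ Om p n ↑Pl := by
  intro k
  induction k with
  | zero =>
    intro Pl R b y hbP hyR hyb hk
    -- measure 0 : centralizer ⊓ Pl = Pl, so b ∈ ZC Pl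
    have hcard : Nat.card ↥(Pl : Subgroup G) ≤
        Nat.card ↥(Subgroup.centralizer {b} ⊓ (Pl : Subgroup G)) := by
      have := Nat.le_zero.mp hk
      omega
    have heq : Subgroup.centralizer {b} ⊓ (Pl : Subgroup G) = ↑Pl :=
      Subgroup.eq_of_le_of_card_ge inf_le_right hcard
    have hbZ : b ∈ ZC ↑Pl := by
      rw [mem_ZC_iff]
      refine ⟨?_, hbP⟩
      intro h hh
      have h1 : h ∈ Subgroup.centralizer {b} ⊓ (Pl : Subgroup G) := by rw [heq]; exact hh
      exact (Subgroup.mem_centralizer_iff.mp (Subgroup.mem_inf.mp h1).1 b rfl).symm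
    exact burnside hbZ hyR hyb
  | succ k ih =>
    intro Pl R b y hbP hyR hyb hk
    by_cases hbZ : b ∈ ZC ↑Pl
    · exact burnside hbZ hyR hyb
    set D : Subgroup G := Subgroup.centralizer {b} ⊓ (Pl : Subgroup G) with hD
    have hDP : D ≤ ↑Pl := inf_le_right
    have hbD : b ∈ D := by
      refine Subgroup.mem_inf.mpr ⟨?_, hbP⟩
      rw [Subgroup.mem_centralizer_iff]
      rintro h rfl
      rfl
    have hDne : D ≠ ↑Pl := by
      intro h
      apply hbZ
      rw [mem_ZC_iff]
      refine ⟨?_, hbP⟩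
      intro h' hh'
      have h1 : h' ∈ D := by rw [h]; exact hh'
      exact (Subgroup.mem_centralizer_iff.mp (Subgroup.mem_inf.mp h1).1 b rfl).symm
    obtain ⟨t₀, ht₀P, ht₀N, ht₀D⟩ := exists_normalizer_elt Pl hDP hDne
    have hRcent : ↑R ≤ Subgroup.centralizer {b} := le_centralizer_of_ZC (hyb ▸ pow_mem hyR _)
    have hDcent : D ≤ Subgroup.centralizer {b} := inf_le_left
    have hDp : IsPGroup p ↥D := IsPGroup.to_le Pl.isPGroup' hDP
    obtain ⟨c, hcK, hDR1⟩ := sylow_step R hRcent D hDp hDcent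
    set R₁ : Sylow p G := c • R with hR₁
    set y₁ : G := c * y * c⁻¹ with hy₁
    have hy₁Z : y₁ ∈ ZC ↑R₁ := ZC_conj hyR
    have hy₁b : y₁ ^ p ^ n = b := by
      have hcb : b * c = c * b := Subgroup.mem_centralizer_iff.mp hcK b rfl
      rw [hy₁, conj_pow, hyb, ← hcb]
      group
    by_cases hy₁D : y₁ ∈ D
    · -- sub-case (i) : apply the p-group lemma, contradiction with hbZ
      exfalso
      apply hbZ
      have hclP := lcs_all P₀ hcl₀ Pl
      set yy : ↥(Pl : Subgroup G) := ⟨y₁, hDP hy₁D⟩ with hyy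
      have hyypow : (yy ^ p ^ n : ↥(Pl : Subgroup G)) = ⟨b, hbP⟩ := by
        apply Subtype.ext
        rw [SubmonoidClass.coe_pow]
        exact hy₁b
      have hcent : ∀ w : ↥(Pl : Subgroup G),
          w * yy ^ p ^ n = yy ^ p ^ n * w → w * yy = yy * w := by
        intro w hw
        rw [hyypow] at hw
        have hwb : (w : G) * b = b * (w : G) := Subtype.ext_iff.mp hw
        have hwD : (w : G) ∈ D := by
          refine Subgroup.mem_inf.mpr ⟨?_, w.2⟩
          rw [Subgroup.mem_centralizer_iff]
          rintro h rfl
          exact hwb.symm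
        have h3 := (mem_ZC_iff.mp hy₁Z).1 (w : G) (hDR1 hwD)
        exact Subtype.ext h3
      have hP2 := P2_lemma hp Pl.isPGroup' hclP yy hcent
      rw [mem_ZC_iff]
      refine ⟨?_, hbP⟩
      intro h hh
      have h4 := hP2 ⟨h, hh⟩
      rw [hyypow] at h4
      exact Subtype.ext_iff.mp h4
    · -- sub-case (ii) : find a p-element of the centralizer of D outside D
      exfalso
      set Nn : Subgroup G := Subgroup.normalizer (D : Set G) with hNn
      set Cc : Subgroup G := Subgroup.centralizer (D : Set G) with hCc
      have hCN : Cc ≤ Nn := by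
        intro z hz
        rw [hNn, Subgroup.mem_normalizer_iff]
        intro h
        constructor
        · intro hh
          have h1 : h * z = z * h := Subgroup.mem_centralizer_iff.mp hz h hh
          have h2 : z * h * z⁻¹ = h := by rw [← h1]; group
          rw [h2]; exact hh
        · intro hh
          have h1 := Subgroup.mem_centralizer_iff.mp hz _ hh
          have h2 : h = z * h * z⁻¹ := by
            calc h = z⁻¹ * ((z * h * z⁻¹) * z) * z⁻¹ * z := by group
              _ = z⁻¹ * (z * (z * h * z⁻¹)) * z⁻¹ * z := by rw [h1]
              _ = z * h * z⁻¹ := by group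
          rw [← h2] at hh
          exact hh
      have hy₁C : y₁ ∈ Cc := by
        rw [hCc, Subgroup.mem_centralizer_iff]
        intro h hh
        exact (mem_ZC_iff.mp hy₁Z).1 h (hDR1 hh)
      have hy₁N : y₁ ∈ Nn := hCN hy₁C
      have hT : IsPGroup p ↥((Nn ⊓ (Pl : Subgroup G)).subgroupOf Nn) :=
        (IsPGroup.to_le Pl.isPGroup' inf_le_right).comap_subtype
      obtain ⟨S', hS'⟩ := hT.exists_le_sylow
      have hy₁R₁ : y₁ ∈ R₁ := zc_le hy₁Z
      obtain ⟨k₀, hk₀⟩ := R₁.isPGroup' ⟨y₁, hy₁R₁⟩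
      have hk₀' : y₁ ^ p ^ k₀ = 1 := by
        have h5 := Subtype.ext_iff.mp hk₀
        rwa [SubmonoidClass.coe_pow] at h5
      set v₀ : ↥Nn := ⟨y₁, hy₁N⟩ with hv₀
      have hv₀pow : v₀ ^ p ^ k₀ = 1 := by
        apply Subtype.ext
        rw [SubmonoidClass.coe_pow]
        exact hk₀'
      have hzp : IsPGroup p ↥(Subgroup.zpowers v₀) := by
        intro g
        obtain ⟨m, hm⟩ := Subgroup.mem_zpowers_iff.mp g.2
        refine ⟨k₀, ?_⟩
        apply Subtype.ext
        rw [SubmonoidClass.coe_pow]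
        have h6 : (g : ↥Nn) = v₀ ^ m := hm.symm
        rw [h6]
        calc (v₀ ^ m) ^ p ^ k₀ = (v₀ ^ m) ^ ((p ^ k₀ : ℕ) : ℤ) := by rw [zpow_natCast]
          _ = v₀ ^ (m * ((p ^ k₀ : ℕ) : ℤ)) := by rw [← zpow_mul]
          _ = v₀ ^ (((p ^ k₀ : ℕ) : ℤ) * m) := by rw [mul_comm]
          _ = (v₀ ^ ((p ^ k₀ : ℕ) : ℤ)) ^ m := by rw [zpow_mul]
          _ = ((v₀ ^ (p ^ k₀ : ℕ)) : ↥Nn) ^ m := by rw [zpow_natCast]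
          _ = 1 := by rw [hv₀pow, one_zpow]
      obtain ⟨Sv, hSv⟩ := hzp.exists_le_sylow
      haveI : Finite (Sylow p ↥Nn) := finite_sylow
      obtain ⟨h', hh'⟩ := MulAction.exists_smul_eq ↥Nn Sv S'
      set v₂' : ↥Nn := h' * v₀ * h'⁻¹ with hv₂'
      have hv₂S : v₂' ∈ S' := by
        have h7 : v₂' ∈ ((h' • Sv : Sylow p ↥Nn) : Subgroup ↥Nn) := by
          apply mem_smul_iff.mpr
          have h8 : h'⁻¹ * v₂' * h' = v₀ := by rw [hv₂']; group
          rw [h8]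
          exact hSv (Subgroup.mem_zpowers v₀)
        rw [hh'] at h7
        exact h7
      set v₂ : G := (v₂' : G) with hv₂
      have hhn : (h' : G) ∈ Subgroup.normalizer (D : Set G) := h'.2
      have hv₂val : v₂ = (h' : G) * y₁ * (h' : G)⁻¹ := rfl
      have hv₂C : v₂ ∈ Cc := by
        rw [hCc, Subgroup.mem_centralizer_iff]
        intro d hd
        have hd' : (h' : G)⁻¹ * d * (h' : G) ∈ D :=
          (Subgroup.mem_normalizer_iff''.mp hhn d).mp hd
        have h9 := Subgroup.mem_centralizer_iff.mp hy₁C _ hd'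
        calc d * v₂ = (h' : G) * ((h' : G)⁻¹ * d * (h' : G) * y₁) * (h' : G)⁻¹ := by
              rw [hv₂val]; group
          _ = (h' : G) * (y₁ * ((h' : G)⁻¹ * d * (h' : G))) * (h' : G)⁻¹ := by rw [h9]
          _ = v₂ * d := by rw [hv₂val]; group
      have hv₂D : v₂ ∉ D := by
        intro hIn
        apply hy₁D
        have h10 := (Subgroup.mem_normalizer_iff''.mp hhn v₂).mp hIn
        have h11 : (h' : G)⁻¹ * v₂ * (h' : G) = y₁ := by rw [hv₂val]; group
        rwa [h11] at h10
      set Smap : Subgroup G := Subgroup.map Nn.subtype (S' : Subgroup ↥Nn) with hSmap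
      have hSmapP : IsPGroup p ↥Smap := S'.isPGroup'.map _
      obtain ⟨Pst, hPst⟩ := hSmapP.exists_le_sylow
      have hTP : Nn ⊓ (Pl : Subgroup G) ≤ Smap := by
        intro x hx
        exact Subgroup.mem_map.mpr ⟨⟨x, (Subgroup.mem_inf.mp hx).1⟩,
          hS' (by rwa [Subgroup.mem_subgroupOf]), rfl⟩
      have hDle : D ≤ Nn ⊓ (Pl : Subgroup G) := le_inf Subgroup.le_normalizer hDP
      have hbPst : b ∈ Pst := hPst (hTP (hDle hbD))
      have hv₂Pst : v₂ ∈ Pst := hPst (Subgroup.mem_map.mpr ⟨v₂', hv₂S, rfl⟩)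
      set Dst : Subgroup G := Subgroup.centralizer {b} ⊓ (Pst : Subgroup G) with hDst
      have hDleD : D ≤ Dst := by
        intro x hx
        exact Subgroup.mem_inf.mpr ⟨(Subgroup.mem_inf.mp hx).1, hPst (hTP (hDle hx))⟩
      have hv₂Dst : v₂ ∈ Dst := by
        refine Subgroup.mem_inf.mpr ⟨?_, hv₂Pst⟩
        rw [Subgroup.mem_centralizer_iff]
        intro h hh
        have hhb : h = b := hh
        rw [hhb]
        exact Subgroup.mem_centralizer_iff.mp hv₂C b hbD
      have hcardlt : Nat.card ↥D < Nat.card ↥Dst := by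
        have hle := Subgroup.card_le_of_le hDleD
        rcases lt_or_eq_of_le hle with h | h
        · exact h
        · exfalso
          have h13 : D = Dst := Subgroup.eq_of_le_of_card_ge hDleD (le_of_eq h.symm)
          rw [← h13] at hv₂Dst
          exact hv₂D hv₂Dst
      have hcardP : Nat.card ↥(Pst : Subgroup G) = Nat.card ↥(Pl : Subgroup G) :=
        card_sylow_eq Pst Pl
      have hDltP : Nat.card ↥D < Nat.card ↥(Pl : Subgroup G) := by
        have hle := Subgroup.card_le_of_le hDP
        rcases lt_or_eq_of_le hle with h | h
        · exact h
        · exact absurd (Subgroup.eq_of_le_of_card_ge hDP (le_of_eq h.symm)) hDne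
      have hmeas : Nat.card ↥(Pst : Subgroup G) - Nat.card ↥Dst ≤ k := by
        rw [hcardP]
        have h12 := Nat.sub_lt_sub_left hDltP hcardlt
        omega
      have hIH := ih Pst R₁ b y₁ hbPst hy₁Z hy₁b hmeas
      have hbZst : b ∈ ZC ↑Pst := om_le_zc hIH
      have ht₀Pst : t₀ ∈ Pst := hPst (hTP (Subgroup.mem_inf.mpr ⟨ht₀N, ht₀P⟩))
      apply ht₀D
      refine Subgroup.mem_inf.mpr ⟨?_, ht₀P⟩
      rw [Subgroup.mem_centralizer_iff]
      rintro h rfl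
      exact ((mem_ZC_iff.mp hbZst).1 t₀ ht₀Pst).symm

end Fusion

/-- If a nonabelian Sylow `p`-subgroup `P` of a finite group `G` has nilpotence class at
most `n(p-1)+1`, and no nontrivial abelian subgroup of `P` is strongly closed in `P` with
respect to `G`, then `Z(P)` has exponent at most `p ^ n`. -/
theorem exponent_center_le_of_no_stronglyClosed_abelian (p n : ℕ) (hp : p.Prime)
    (G : Type*) [Group G] [Finite G] (P : Sylow p G)
    (hnonab : ¬ ∀ x y : ↥(P : Subgroup G), x * y = y * x)
    (hclass : upperCentralSeries ↥(P : Subgroup G) (n * (p - 1) + 1) = ⊤)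
    (hsc : ∀ A : Subgroup G, A ≤ (P : Subgroup G) →
      (∀ a ∈ A, ∀ b ∈ A, a * b = b * a) → IsStronglyClosed A (P : Subgroup G) → A = ⊥) :
    ∀ x ∈ Subgroup.center ↥(P : Subgroup G), x ^ p ^ n = 1 := by
  haveI : Fact p.Prime := ⟨hp⟩
  haveI hnil : Group.IsNilpotent ↥(P : Subgroup G) := ⟨⟨_, hclass⟩⟩
  have hcl₀ : Subgroup.lowerCentralSeries (⊤ : Subgroup ↥(P : Subgroup G)) (n * (p - 1) + 1) = ⊥ :=
    lowerCentralSeries_eq_bot_iff_nilpotencyClass_le.mpr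
      (upperCentralSeries_eq_top_iff_nilpotencyClass_le.mp hclass)
  have hAP : Om p n (P : Subgroup G) ≤ (P : Subgroup G) := le_trans om_le_zc zc_le
  have hAcomm : ∀ a ∈ Om p n (P : Subgroup G), ∀ b ∈ Om p n (P : Subgroup G),
      a * b = b * a := by
    intro a ha b hb
    exact ((mem_ZC_iff.mp (om_le_zc ha)).1 b (hAP hb)).symm
  have hAsc : IsStronglyClosed (Om p n (P : Subgroup G)) (P : Subgroup G) := by
    intro g a ha hmem
    obtain ⟨z, hz, hzpow⟩ := mem_Om_iff.mp ha
    have h1 : g⁻¹ * z * (g⁻¹)⁻¹ ∈ ZC ↑(g⁻¹ • P : Sylow p G) := ZC_conj hz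
    rw [inv_inv] at h1
    have h2 : (g⁻¹ * z * g) ^ p ^ n = g⁻¹ * a * g := by
      have h3 : g⁻¹ * z * g = g⁻¹ * z * (g⁻¹)⁻¹ := by rw [inv_inv]
      rw [h3, conj_pow, hzpow, inv_inv]
    exact propS hp P hcl₀
      (Nat.card ↥(P : Subgroup G) -
        Nat.card ↥(Subgroup.centralizer {g⁻¹ * a * g} ⊓ (P : Subgroup G)))
      P (g⁻¹ • P) (g⁻¹ * a * g) (g⁻¹ * z * g) hmem h1 h2 le_rfl
  have hAbot := hsc _ hAP hAcomm hAsc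
  intro x hx
  have hxZC : (x : G) ∈ ZC (P : Subgroup G) := by
    rw [mem_ZC_iff]
    refine ⟨?_, x.2⟩
    intro h hh
    exact Subtype.ext_iff.mp ((Subgroup.mem_center_iff.mp hx) ⟨h, hh⟩)
  have hmem : ((x : G)) ^ p ^ n ∈ Om p n (P : Subgroup G) :=
    mem_Om_iff.mpr ⟨(x : G), hxZC, rfl⟩
  rw [hAbot, Subgroup.mem_bot] at hmem
  apply Subtype.ext
  rw [SubmonoidClass.coe_pow]
  exact hmem
end

section
/- Let G be a group and m a positive integer such that x^m = 1 for every x in the center Z(G). Then for every k ≥ 0 and every element x of the (k+1)-st term Z^{k+1}(G) of the upper central series of G, one has x^m ∈ Z^k(G). In particular, every upper central quotient Z^{k+1}(G)/Z^k(G) has exponent dividing m. -/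
open scoped commutatorElement

private lemma commutator_pow_left_of_center {H : Type*} [Group H] {a b : H}
    (h : ⁅a, b⁆ ∈ Subgroup.center H) : ∀ n : ℕ, ⁅a ^ n, b⁆ = ⁅a, b⁆ ^ n := by
  intro n
  induction n with
  | zero => simp [commutatorElement_def]
  | succ n ih =>
    have key : ⁅a ^ (n + 1), b⁆ = a * ⁅a ^ n, b⁆ * a⁻¹ * ⁅a, b⁆ := by
      simp only [commutatorElement_def, pow_succ']
      group
    rw [key, ih]
    have hc : ⁅a, b⁆ ^ n ∈ Subgroup.center H := pow_mem h n
    rw [Subgroup.mem_center_iff.mp hc a, pow_succ]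
    group

/-- If every element of the center of `G` satisfies `x ^ m = 1`, then for every `k` the
`m`-th power of every element of `Z^{k+1}(G)` lies in `Z^k(G)`; in particular every upper
central quotient has exponent dividing `m`. -/
theorem pow_mem_upperCentralSeries_of_center_exponent (G : Type*) [Group G] (m : ℕ)
    (hm : 0 < m) (hZ : ∀ x ∈ Subgroup.center G, x ^ m = 1) :
    ∀ k : ℕ, ∀ x ∈ upperCentralSeries G (k + 1), x ^ m ∈ upperCentralSeries G k := by
  intro k
  induction k with
  | zero =>
    intro x hx
    rw [show upperCentralSeries G (0 + 1) = Subgroup.center G from Subgroup.upperCentralSeries_one G] at hx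
    simpa [upperCentralSeries] using hZ x hx
  | succ k ih =>
    intro x hx
    refine Subgroup.mem_upperCentralSeries_succ_iff.mpr ?_
    intro t
    set N := Subgroup.upperCentralSeries G k with hN
    -- commutator of x with t lies in Z^{k+1}
    have h1 : ⁅x, t⁆ ∈ upperCentralSeries G (k + 1) := by
      have := (mem_upperCentralSeries_succ_iff.mp hx) t
      simpa [commutatorElement_def, upperCentralSeries] using this
    have hIH : ⁅x, t⁆ ^ m ∈ N := ih _ h1
    -- work in the quotient by N
    have hc : ⁅(x : G ⧸ N), (t : G ⧸ N)⁆ ∈ Subgroup.center (G ⧸ N) := by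
      rw [Subgroup.mem_center_iff]
      intro g
      obtain ⟨s, rfl⟩ := QuotientGroup.mk_surjective g
      have h2 : ⁅⁅x, t⁆, s⁆ ∈ N := by
        have := (mem_upperCentralSeries_succ_iff.mp h1) s
        simpa [commutatorElement_def] using this
      have : ((⁅⁅x, t⁆, s⁆ : G) : G ⧸ N) = 1 := (QuotientGroup.eq_one_iff _).mpr h2
      have h3 : ⁅⁅(x : G ⧸ N), (t : G ⧸ N)⁆, (s : G ⧸ N)⁆ = 1 := by
        simpa only [commutatorElement_def, QuotientGroup.mk_mul, QuotientGroup.mk_inv] using this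
      have := commutatorElement_eq_one_iff_commute.mp h3
      exact this.symm.eq
    have hkey : ((x ^ m * t * (x ^ m)⁻¹ * t⁻¹ : G) : G ⧸ N) = 1 := by
      have : ⁅(x : G ⧸ N) ^ m, (t : G ⧸ N)⁆ = ⁅(x : G ⧸ N), (t : G ⧸ N)⁆ ^ m :=
        commutator_pow_left_of_center hc m
      have h4 : ⁅(x : G ⧸ N), (t : G ⧸ N)⁆ ^ m = 1 := by
        have : ((⁅x, t⁆ ^ m : G) : G ⧸ N) = 1 := (QuotientGroup.eq_one_iff _).mpr hIH
        simpa [commutatorElement_def] using this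
      have h5 : ⁅(x : G ⧸ N) ^ m, (t : G ⧸ N)⁆ = 1 := this.trans h4
      simpa [commutatorElement_def] using h5
    exact (QuotientGroup.eq_one_iff _).mp hkey
end

section
/- Let G be a nilpotent group of nilpotence class at most c, and let m be a positive integer such that x^m = 1 for every x in the center Z(G). Then G has exponent dividing m^c, i.e., x^{m^c} = 1 for every x ∈ G. -/
private lemma aux_pow_commutator {G : Type*} [Group G] (x g : G)
    (h : x * g * x⁻¹ * g⁻¹ ∈ Subgroup.center G) :
    ∀ k : ℕ, x ^ k * g * (x ^ k)⁻¹ * g⁻¹ = (x * g * x⁻¹ * g⁻¹) ^ k := by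
  intro k
  induction k with
  | zero => simp
  | succ k ih =>
    have hck : x * (x * g * x⁻¹ * g⁻¹) ^ k = (x * g * x⁻¹ * g⁻¹) ^ k * x :=
      Subgroup.mem_center_iff.mp ((Subgroup.center G).pow_mem h k) x
    calc x ^ (k + 1) * g * (x ^ (k + 1))⁻¹ * g⁻¹
        = x * (x ^ k * g * (x ^ k)⁻¹ * g⁻¹) * x⁻¹ * (x * g * x⁻¹ * g⁻¹) := by group
      _ = x * (x * g * x⁻¹ * g⁻¹) ^ k * x⁻¹ * (x * g * x⁻¹ * g⁻¹) := by rw [ih]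
      _ = (x * g * x⁻¹ * g⁻¹) ^ k * x * x⁻¹ * (x * g * x⁻¹ * g⁻¹) := by rw [hck]
      _ = (x * g * x⁻¹ * g⁻¹) ^ (k + 1) := by rw [pow_succ, mul_inv_cancel_right]

private lemma aux_key (c : ℕ) : ∀ (G : Type u) [Group G] (m : ℕ),
    (∀ x ∈ Subgroup.center G, x ^ m = 1) →
    ∀ x ∈ upperCentralSeries G c, x ^ m ^ c = 1 := by
  induction c with
  | zero =>
    intro G _ m hZ x hx
    have hx1 : x = 1 := by simpa [upperCentralSeries, upperCentralSeries_zero, Subgroup.mem_bot] using hx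
    simp [hx1]
  | succ c ih =>
    intro G _ m hZ x hx
    have hZQ : ∀ y ∈ Subgroup.center (G ⧸ Subgroup.center G), y ^ m = 1 := by
      intro y hy
      obtain ⟨x₀, rfl⟩ := QuotientGroup.mk'_surjective (Subgroup.center G) y
      have hx₀ : x₀ ∈ upperCentralSeries G 2 := by
        show x₀ ∈ Subgroup.upperCentralSeries G (Nat.succ 1)
        rw [← comap_upperCentralSeries_quotient_center (G := G) 1]
        simpa [upperCentralSeries_one, Subgroup.mem_comap] using hy
      have hcomm : ∀ g : G, x₀ * g * x₀⁻¹ * g⁻¹ ∈ Subgroup.center G := by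
        intro g
        have := mem_upperCentralSeries_succ_iff.mp hx₀ g
        simpa [upperCentralSeries_one, commutatorElement_def] using this
      have hpow : x₀ ^ m ∈ Subgroup.center G := by
        rw [Subgroup.mem_center_iff]
        intro g
        have h1 := aux_pow_commutator x₀ g (hcomm g) m
        have h2 : (x₀ * g * x₀⁻¹ * g⁻¹) ^ m = 1 := hZ _ (hcomm g)
        have h3 : x₀ ^ m * g * (x₀ ^ m)⁻¹ * g⁻¹ = 1 := by rw [h1, h2]
        rw [mul_inv_eq_one] at h3
        conv_lhs => rw [← h3]
        group
      rw [← map_pow]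
      exact (QuotientGroup.eq_one_iff _).mpr hpow
    have hxQ : (QuotientGroup.mk' (Subgroup.center G) x) ∈
        upperCentralSeries (G ⧸ Subgroup.center G) c := by
      change x ∈ Subgroup.upperCentralSeries G c.succ at hx
      rw [← comap_upperCentralSeries_quotient_center (G := G) c] at hx
      exact hx
    have hq := ih (G ⧸ Subgroup.center G) m hZQ _ hxQ
    have hmem : x ^ m ^ c ∈ Subgroup.center G := by
      rw [← QuotientGroup.eq_one_iff]
      simpa [map_pow] using hq
    calc x ^ m ^ (c + 1) = (x ^ m ^ c) ^ m := by rw [← pow_mul, pow_succ]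
      _ = 1 := hZ _ hmem

/-- If `G` is nilpotent of class at most `c` and every element of `Z(G)` satisfies
`x ^ m = 1`, then `G` has exponent dividing `m ^ c`. -/
theorem exponent_dvd_of_center_exponent (G : Type*) [Group G] (c m : ℕ) (hm : 0 < m)
    (hclass : upperCentralSeries G c = ⊤)
    (hZ : ∀ x ∈ Subgroup.center G, x ^ m = 1) :
    ∀ x : G, x ^ m ^ c = 1 := by
  intro x
  exact aux_key c G m hZ x (hclass ▸ Subgroup.mem_top x)
end

section
/- Let p be a prime, n a nonnegative integer, and let P be a nontrivial finite p-group of nilpotence class at most n(p-1)+1. If Q is a subgroup of P such that the centralizer C_P(℧ⁿ(Z(Q))) equals Q, then Q = P. -/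
open Polynomial in
private lemma poly_fact {p : ℕ} (hp : p.Prime) :
    ∃ s : ℤ[X], (1 + X : ℤ[X]) ^ p = 1 + X ^ p + C (p : ℤ) * X * (1 + X * s) := by
  haveI : Fact p.Prime := ⟨hp⟩
  set D : ℤ[X] := (1 + X) ^ p - 1 - X ^ p with hD
  have hmap : D.map (Int.castRingHom (ZMod p)) = 0 := by
    simp only [hD, Polynomial.map_sub, Polynomial.map_pow, Polynomial.map_add,
      Polynomial.map_one, Polynomial.map_X]
    rw [add_pow_char]
    ring
  have hdvd : ∀ i, (p : ℤ) ∣ D.coeff i := by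
    intro i
    have h := congrArg (fun q => Polynomial.coeff q i) hmap
    simp only [Polynomial.coeff_map, Polynomial.coeff_zero] at h
    exact_mod_cast (ZMod.intCast_zmod_eq_zero_iff_dvd _ p).mp h
  obtain ⟨E, hE⟩ := (Polynomial.C_dvd_iff_dvd_coeff _ _).mpr hdvd
  have hp2 : 2 ≤ p := hp.two_le
  have hpne0 : ¬ p = 0 := by omega
  have h1nep : ¬ (1 : ℕ) = p := by omega
  have hcoeff0 : D.coeff 0 = 0 := by
    simp [hD, Polynomial.coeff_zero_eq_eval_zero, hpne0]
  have hcoeff1 : D.coeff 1 = p := by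
    have hd : Polynomial.derivative ((1 + X : ℤ[X]) ^ p)
        = C (p : ℤ) * (1 + X) ^ (p - 1) := by
      rw [Polynomial.derivative_pow]
      simp
    have h1 : ((1 + X : ℤ[X]) ^ p).coeff 1 = p := by
      have := congrArg (fun f => Polynomial.coeff f 0) hd
      simp only [Polynomial.coeff_derivative, Nat.cast_zero, zero_add, mul_one] at this
      rw [this]
      simp [Polynomial.coeff_zero_eq_eval_zero]
    simp [hD, h1, Polynomial.coeff_X_pow, Polynomial.coeff_one, h1nep]
  have hpne : (p : ℤ) ≠ 0 := by exact_mod_cast hp.ne_zero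
  have hE0 : E.coeff 0 = 0 := by
    have h := hcoeff0
    rw [hE, Polynomial.coeff_C_mul] at h
    exact (mul_eq_zero.mp h).resolve_left hpne
  have hE1 : E.coeff 1 = 1 := by
    have h := hcoeff1
    rw [hE, Polynomial.coeff_C_mul] at h
    exact mul_left_cancel₀ hpne (by linear_combination h)
  obtain ⟨E₁, hE₁⟩ := Polynomial.X_dvd_iff.mpr hE0
  have hE₁0 : E₁.coeff 0 = 1 := by
    have : E.coeff 1 = E₁.coeff 0 := by rw [hE₁, Polynomial.coeff_X_mul]
    rw [← this, hE1]
  obtain ⟨s, hs⟩ := Polynomial.X_dvd_iff.mpr (show (E₁ - 1).coeff 0 = 0 by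
    simp [hE₁0, Polynomial.coeff_one])
  refine ⟨s, ?_⟩
  have hEeq : E = X * (1 + X * s) := by
    rw [hE₁]
    have : E₁ = 1 + X * s := by linear_combination hs
    rw [this]
  have := hE
  rw [hEeq] at this
  linear_combination this

open Polynomial in
private lemma comm_ring_fact {R : Type*} [CommRing R] {p : ℕ} (hp : p.Prime) (n : ℕ)
    {u : R} (hu : u ^ (n * (p - 1) + 1) = 0) (ht : (1 + u) ^ p = 1) :
    (p : R) ^ n * u = 0 := by
  obtain ⟨s, hs⟩ := poly_fact hp
  have key := congrArg (Polynomial.aeval u) hs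
  simp only [map_add, map_mul, map_one, map_pow, Polynomial.aeval_X, Polynomial.aeval_C,
    algebraMap_int_eq, eq_intCast, Int.cast_natCast, map_natCast] at key
  rw [ht] at key
  set w : R := Polynomial.aeval u s with hw
  have hrel : (p : R) * u * (1 + u * w) = - u ^ p := by linear_combination - key
  have hnu : IsNilpotent u := ⟨_, hu⟩
  have hnuw : IsNilpotent (u * w) := (Commute.all u w).isNilpotent_mul_right hnu
  have hun : IsUnit (1 + u * w) := hnuw.isUnit_one_add
  obtain ⟨v, hv⟩ := hun.exists_right_inv
  have hpu : (p : R) * u = u ^ p * (-v) := by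
    calc (p : R) * u = (p : R) * u * ((1 + u * w) * v) := by rw [hv, mul_one]
    _ = ((p : R) * u * (1 + u * w)) * v := by ring
    _ = u ^ p * (-v) := by rw [hrel]; ring
  have main : ∀ j : ℕ, (p : R) ^ j * u = u ^ (j * (p - 1) + 1) * (-v) ^ j := by
    intro j
    induction j with
    | zero => simp
    | succ j ih =>
      have hp2 : 2 ≤ p := hp.two_le
      have hexp : j * (p - 1) + p = (j + 1) * (p - 1) + 1 := by
        have h1 : (j + 1) * (p - 1) = j * (p - 1) + (p - 1) := by ring
        omega
      calc (p : R) ^ (j + 1) * u = (p : R) * ((p : R) ^ j * u) := by ring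
      _ = (p : R) * (u ^ (j * (p - 1)) * u * (-v) ^ j) := by rw [ih, pow_succ]
      _ = ((p : R) * u) * u ^ (j * (p - 1)) * (-v) ^ j := by ring
      _ = u ^ (j * (p - 1) + p) * (-v) ^ (j + 1) := by rw [hpu]; ring
      _ = u ^ ((j + 1) * (p - 1) + 1) * (-v) ^ (j + 1) := by rw [hexp]
  have := main n
  rw [hu, zero_mul] at this
  exact this

open Polynomial in
private lemma ring_fact {A : Type*} [Ring A] {p : ℕ} (hp : p.Prime) (n : ℕ)
    {u : A} (hu : u ^ (n * (p - 1) + 1) = 0) (ht : (1 + u) ^ p = 1) :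
    (p : A) ^ n * u = 0 := by
  set c := n * (p - 1) + 1 with hc
  set I : Ideal ℤ[X] := Ideal.span {X ^ c, (1 + X) ^ p - 1} with hI
  set π := Ideal.Quotient.mk I with hπ
  have hx1 : (π X) ^ c = 0 := by
    rw [← map_pow, Ideal.Quotient.eq_zero_iff_mem]
    exact Ideal.subset_span (by simp)
  have hx2 : (1 + π X) ^ p = 1 := by
    have h0 : π ((1 + X) ^ p - 1) = 0 :=
      Ideal.Quotient.eq_zero_iff_mem.mpr (Ideal.subset_span (by simp))
    have h1 := sub_eq_zero.mp (by simpa [map_sub, map_pow, map_add, map_one] using h0)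
    simpa using h1
  have h0 := comm_ring_fact hp n hx1 hx2
  have hmem : ((p : ℤ[X]) ^ n * X) ∈ I := by
    rw [← Ideal.Quotient.eq_zero_iff_mem]
    simpa [map_mul, map_pow, map_natCast] using h0
  rw [Ideal.mem_span_pair] at hmem
  obtain ⟨a, b, hab⟩ := hmem
  have h := congrArg (Polynomial.aeval u) hab
  simp only [map_add, map_mul, map_pow, map_sub, map_one, Polynomial.aeval_X, map_natCast] at h
  rw [hu, ht] at h
  simpa using h.symm

private lemma key_aux {P : Type*} [Group P] {p : ℕ} (hp : p.Prime) (n : ℕ)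
    (hlcs : Subgroup.lowerCentralSeries (⊤ : Subgroup P) (n * (p - 1) + 1) = ⊥)
    (Z : Subgroup P) (x : P)
    (hcomm : ∀ a ∈ Z, ∀ b ∈ Z, a * b = b * a)
    (hconj : ∀ z ∈ Z, x⁻¹ * z * x ∈ Z)
    (hxp : ∀ z ∈ Z, x ^ p * z = z * x ^ p)
    (z : P) (hz : z ∈ Z) : x * z ^ p ^ n = z ^ p ^ n * x := by
  letI : CommGroup ↥Z :=
    { (inferInstance : Group ↥Z) with
      mul_comm := fun a b => Subtype.ext (hcomm a a.2 b b.2) }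
  let T : AddMonoid.End (Additive ↥Z) :=
    AddMonoidHom.mk' (fun m => Additive.ofMul
      (⟨x⁻¹ * ((Additive.toMul m : ↥Z) : P) * x, hconj _ (Additive.toMul m).2⟩ : ↥Z))
      (fun a b => congrArg Additive.ofMul (Subtype.ext (show
        x⁻¹ * ((↑(Additive.toMul a) : P) * ↑(Additive.toMul b)) * x
          = (x⁻¹ * ↑(Additive.toMul a) * x) * (x⁻¹ * ↑(Additive.toMul b) * x) by group)))
  set u : AddMonoid.End (Additive ↥Z) := T - 1 with hu_def
  have hT_apply : ∀ m : Additive ↥Z,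
      ((Additive.toMul (T m) : ↥Z) : P) = x⁻¹ * ((Additive.toMul m : ↥Z) : P) * x :=
    fun m => rfl
  have hu_apply : ∀ m : Additive ↥Z,
      ((Additive.toMul (u m) : ↥Z) : P)
        = x⁻¹ * ((Additive.toMul m : ↥Z) : P) * x * ((Additive.toMul m : ↥Z) : P)⁻¹ := by
    intro m
    have h1 : u m = T m - m := rfl
    rw [h1, toMul_sub, div_eq_mul_inv]
    push_cast
    rw [hT_apply]
  have hmem : ∀ (k : ℕ) (m : Additive ↥Z),
      ((Additive.toMul ((u ^ k) m) : ↥Z) : P) ∈ Subgroup.lowerCentralSeries (⊤ : Subgroup P) k := by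
    intro k
    induction k with
    | zero => intro m; exact Subgroup.mem_top _
    | succ k ih =>
      intro m
      have h1 : (u ^ (k + 1)) m = u ((u ^ k) m) := by rw [pow_succ']; rfl
      rw [h1, hu_apply]
      set w : P := ((Additive.toMul ((u ^ k) m) : ↥Z) : P) with hw
      have h2 : x⁻¹ * w * x * w⁻¹ = (w * x⁻¹ * w⁻¹ * x⁻¹⁻¹)⁻¹ := by group
      rw [h2]
      exact (Subgroup.lowerCentralSeries (⊤ : Subgroup P) (k + 1)).inv_mem
        (Subgroup.commutator_mem_commutator (ih m) (Subgroup.mem_top _))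
  have hu_c : u ^ (n * (p - 1) + 1) = 0 := by
    apply AddMonoidHom.ext
    intro m
    have h1 := hmem (n * (p - 1) + 1) m
    rw [hlcs, Subgroup.mem_bot] at h1
    have h2 : Additive.toMul ((u ^ (n * (p - 1) + 1)) m)
        = Additive.toMul ((0 : AddMonoid.End (Additive ↥Z)) m) := Subtype.ext h1
    exact Additive.toMul.injective h2
  have hT_pow : ∀ (k : ℕ) (m : Additive ↥Z),
      ((Additive.toMul ((T ^ k) m) : ↥Z) : P)
        = x⁻¹ ^ k * ((Additive.toMul m : ↥Z) : P) * x ^ k := by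
    intro k
    induction k with
    | zero => intro m; simp
    | succ k ih =>
      intro m
      have h1 : (T ^ (k + 1)) m = T ((T ^ k) m) := by rw [pow_succ']; rfl
      rw [h1, hT_apply, ih]
      group
  have hTp : (1 + u) ^ p = 1 := by
    have h1 : (1 : AddMonoid.End (Additive ↥Z)) + u = T := by
      rw [hu_def, add_comm, sub_add_cancel]
    rw [h1]
    apply AddMonoidHom.ext
    intro m
    have h2 := hT_pow p m
    have hcw := hxp _ (Additive.toMul m).2
    have h3 : x⁻¹ ^ p * ((Additive.toMul m : ↥Z) : P) * x ^ p
        = ((Additive.toMul m : ↥Z) : P) := by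
      rw [inv_pow, mul_assoc, ← hcw, ← mul_assoc, inv_mul_cancel, one_mul]
    rw [h3] at h2
    have h4 : Additive.toMul ((T ^ p) m)
        = Additive.toMul ((1 : AddMonoid.End (Additive ↥Z)) m) := Subtype.ext h2
    exact Additive.toMul.injective h4
  have h0 := ring_fact hp n hu_c hTp
  set m₀ : Additive ↥Z := Additive.ofMul (⟨z, hz⟩ : ↥Z) with hm₀
  have h1 : u ((p ^ n : ℕ) • m₀) = 0 := by
    calc u ((p ^ n : ℕ) • m₀) = (p ^ n : ℕ) • u m₀ := map_nsmul u _ _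
      _ = ((p ^ n : ℕ) : AddMonoid.End (Additive ↥Z)) (u m₀) := by
          rw [AddMonoid.End.natCast_apply]
      _ = ((p : AddMonoid.End (Additive ↥Z)) ^ n * u) m₀ := by
          rw [Nat.cast_pow]; rfl
      _ = 0 := by rw [h0]; rfl
  have hmeq : (p ^ n : ℕ) • m₀ = Additive.ofMul ((⟨z, hz⟩ : ↥Z) ^ p ^ n) :=
    (ofMul_pow _ _).symm
  rw [hmeq] at h1
  have h3 := hu_apply (Additive.ofMul ((⟨z, hz⟩ : ↥Z) ^ p ^ n))
  rw [h1] at h3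
  have h4 : x⁻¹ * z ^ p ^ n * x * (z ^ p ^ n)⁻¹ = 1 := by
    simpa using h3.symm
  have h5 : x⁻¹ * z ^ p ^ n * x = z ^ p ^ n := mul_inv_eq_one.mp h4
  have h7 : x * (x⁻¹ * z ^ p ^ n * x) = z ^ p ^ n * x := by group
  rw [h5] at h7
  exact h7

/-- (Goldschmidt) If `P` is a nontrivial finite `p`-group of nilpotence class at most
`n(p-1)+1` and `Q ≤ P` satisfies `C_P(℧ⁿ(Z(Q))) = Q`, then `Q = P`. -/
theorem eq_top_of_centralizer_mho_center_eq (p n : ℕ) (hp : p.Prime)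
    (P : Type*) [Group P] [Finite P] [Nontrivial P] (hP : IsPGroup p P)
    (hclass : upperCentralSeries P (n * (p - 1) + 1) = ⊤)
    (Q : Subgroup P)
    (hQ : Subgroup.centralizer
      ((mho (p ^ n) ((Subgroup.center ↥Q).map Q.subtype) : Subgroup P) : Set P) = Q) :
    Q = ⊤ := by
  by_contra hne
  classical
  haveI : Group.IsNilpotent P := ⟨⟨n * (p - 1) + 1, hclass⟩⟩
  have hlcs : Subgroup.lowerCentralSeries (⊤ : Subgroup P) (n * (p - 1) + 1) = ⊥ := by
    rw [lowerCentralSeries_eq_bot_iff_nilpotencyClass_le]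
    exact upperCentralSeries_eq_top_iff_nilpotencyClass_le.mp hclass
  -- get x in the normalizer, not in Q, with x^p ∈ Q
  have hltN : Q < Subgroup.normalizer (Q : Set P) :=
    normalizerCondition_of_isNilpotent Q (lt_top_iff_ne_top.mpr hne)
  obtain ⟨y, hyN, hyQ⟩ := SetLike.exists_of_lt hltN
  set N := Subgroup.normalizer (Q : Set P) with hN
  set K : Subgroup ↥N := Q.subgroupOf N with hK
  haveI : K.Normal := Subgroup.normal_in_normalizer
  have hpg : IsPGroup p (↥N ⧸ K) := (hP.to_subgroup N).to_quotient K
  set π := QuotientGroup.mk' K with hπdef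
  set ybar : ↥N ⧸ K := π ⟨y, hyN⟩ with hybar
  have hybar1 : ybar ≠ 1 := by
    rw [hybar, hπdef, Ne, QuotientGroup.mk'_apply, QuotientGroup.eq_one_iff, hK,
      Subgroup.mem_subgroupOf]
    exact hyQ
  have hex : ∃ k, ybar ^ p ^ k = 1 := hpg ybar
  set k₀ := Nat.find hex with hk₀
  have hk₀spec : ybar ^ p ^ k₀ = 1 := Nat.find_spec hex
  have hk₀pos : k₀ ≠ 0 := by
    intro h
    rw [h, pow_zero, pow_one] at hk₀spec
    exact hybar1 hk₀spec
  have hmlt : k₀ - 1 < k₀ := by omega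
  have hne1 : ybar ^ p ^ (k₀ - 1) ≠ 1 := Nat.find_min hex hmlt
  set x : P := y ^ p ^ (k₀ - 1) with hx
  have hxN : x ∈ N := pow_mem hyN _
  have hπ : π ((⟨y, hyN⟩ : ↥N) ^ p ^ (k₀ - 1)) = ybar ^ p ^ (k₀ - 1) := map_pow _ _ _
  have hxQ : x ∉ Q := by
    intro hxQ
    apply hne1
    rw [← hπ, hπdef, QuotientGroup.mk'_apply, QuotientGroup.eq_one_iff, hK,
      Subgroup.mem_subgroupOf]
    exact hxQ
  have hxpQ : x ^ p ∈ Q := by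
    have h1 : π (((⟨y, hyN⟩ : ↥N) ^ p ^ (k₀ - 1)) ^ p) = 1 := by
      rw [map_pow, hπ, ← pow_mul, ← pow_succ, Nat.sub_add_cancel (by omega : 1 ≤ k₀)]
      exact hk₀spec
    rw [hπdef, QuotientGroup.mk'_apply, QuotientGroup.eq_one_iff, hK,
      Subgroup.mem_subgroupOf] at h1
    exact h1
  -- the center Z
  set Z : Subgroup P := (Subgroup.center ↥Q).map Q.subtype with hZ
  have hZ_mem : ∀ z, z ∈ Z ↔ z ∈ Q ∧ ∀ q ∈ Q, q * z = z * q := by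
    intro z
    constructor
    · rintro ⟨a, ha, rfl⟩
      refine ⟨a.2, fun q hq => ?_⟩
      have := (Subgroup.mem_center_iff.mp ha) ⟨q, hq⟩
      exact congrArg Subtype.val this
    · rintro ⟨hzQ, hcom⟩
      exact ⟨⟨z, hzQ⟩, Subgroup.mem_center_iff.mpr
        (fun b => Subtype.ext (hcom b b.2)), rfl⟩
  have hcomm : ∀ a ∈ Z, ∀ b ∈ Z, a * b = b * a := by
    intro a ha b hb
    exact ((hZ_mem b).mp hb).2 a ((hZ_mem a).mp ha).1
  have hconj : ∀ z ∈ Z, x⁻¹ * z * x ∈ Z := by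
    intro z hz
    obtain ⟨hzQ, hcom⟩ := (hZ_mem z).mp hz
    rw [hZ_mem]
    constructor
    · have h1 := (Subgroup.mem_normalizer_iff''.mp hxN) z
      exact h1.mp hzQ
    · intro q hq
      have hq' : x * q * x⁻¹ ∈ Q := (Subgroup.mem_normalizer_iff.mp hxN q).mp hq
      have h2 := hcom _ hq'
      calc q * (x⁻¹ * z * x) = x⁻¹ * (x * q * x⁻¹ * z) * x := by group
        _ = x⁻¹ * (z * (x * q * x⁻¹)) * x := by rw [h2]
        _ = x⁻¹ * z * x * q := by group
  have hxp : ∀ z ∈ Z, x ^ p * z = z * x ^ p := by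
    intro z hz
    exact ((hZ_mem z).mp hz).2 _ hxpQ
  -- x centralizes mho
  have hcent : x ∈ Subgroup.centralizer
      ((mho (p ^ n) Z : Subgroup P) : Set P) := by
    rw [Subgroup.mem_centralizer_iff]
    intro g hg
    have hle : (mho (p ^ n) Z : Subgroup P) ≤ Subgroup.centralizer {x} := by
      rw [mho, Subgroup.closure_le]
      rintro w ⟨zz, hzz, rfl⟩
      simp only [SetLike.mem_coe, Subgroup.mem_centralizer_iff]
      intro h hh
      rw [Set.mem_singleton_iff] at hh
      subst hh
      exact key_aux hp n hlcs Z x hcomm hconj hxp zz hzz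
    have := hle hg
    rw [Subgroup.mem_centralizer_iff] at this
    exact (this x (Set.mem_singleton x)).symm
  rw [hQ] at hcent
  exact hxQ hcent
end

section
/- Let p be an odd prime and n ≥ 1. Let V be the ZMod(p^n)-module of functions from Fin p to ZMod(p^n), and let σ : V → V be the linear automorphism cyclically shifting coordinates, (σ v)(i) = v(i+1). Then the image of the linear map (σ - id)^p equals the set of elements v in the image of (σ - id) satisfying p^{n-1} · v = 0. -/
/-- The cyclic coordinate-shift linear automorphism of `Fin p → R`, as a linear map:
`(shiftLM p R) v i = v (i + 1)`. -/
def shiftLM (p : ℕ) [NeZero p] (R : Type*) [CommRing R] :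
    (Fin p → R) →ₗ[R] (Fin p → R) where
  toFun v i := v (i + 1)
  map_add' _ _ := rfl
  map_smul' _ _ := rfl

open Polynomial in
lemma key_poly (p : ℕ) (hp : p.Prime) :
    ∃ s : ℤ[X], (X + 1)^p = X^p + 1 + C (p:ℤ) * X * (1 + X * s) := by
  set q : ℤ[X] := (X + 1)^p - X^p - 1 - C (p:ℤ) * X with hqdef
  have hcoeff : ∀ k, q.coeff k = (p.choose k : ℤ) - (if k = p then 1 else 0)
      - (if k = 0 then 1 else 0) - (if 1 = k then (p:ℤ) else 0) := by
    intro k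
    simp [hqdef, coeff_X_add_one_pow, coeff_X_pow, coeff_one, coeff_C_mul, coeff_X,
      Polynomial.coeff_sub]
  have c0 : q.coeff 0 = 0 := by
    rw [hcoeff]; simp [Ne.symm hp.ne_zero]
  have c1 : q.coeff 1 = 0 := by
    rw [hcoeff]; simp [Nat.choose_one_right, hp.one_lt.ne, hp.one_lt.ne']
  have hdvd : ∀ k, (p:ℤ) ∣ q.coeff k := by
    intro k
    rcases eq_or_ne k 0 with rfl | hk0
    · rw [c0]; exact dvd_zero _
    rcases eq_or_ne k 1 with rfl | hk1
    · rw [c1]; exact dvd_zero _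
    rcases lt_trichotomy k p with hkp | hkp | hkp
    · rw [hcoeff]
      rw [if_neg hkp.ne, if_neg hk0, if_neg (Ne.symm hk1)]
      simpa using Int.natCast_dvd_natCast.mpr (hp.dvd_choose_self hk0 hkp)
    · rw [hcoeff, hkp]
      rw [if_pos rfl, if_neg hp.ne_zero, if_neg hp.one_lt.ne, Nat.choose_self]
      simp
    · rw [hcoeff]
      rw [if_neg hkp.ne', if_neg hk0, if_neg (Ne.symm hk1), Nat.choose_eq_zero_of_lt hkp]
      simp
  obtain ⟨q1, hq1⟩ := (C_dvd_iff_dvd_coeff _ _).mpr hdvd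
  have hpne : (p : ℤ) ≠ 0 := by exact_mod_cast hp.ne_zero
  have h10 : q1.coeff 0 = 0 := by
    have := c0; rw [hq1, coeff_C_mul] at this
    exact (mul_eq_zero.mp this).resolve_left hpne
  have h11 : q1.coeff 1 = 0 := by
    have := c1; rw [hq1, coeff_C_mul] at this
    exact (mul_eq_zero.mp this).resolve_left hpne
  obtain ⟨s, hs⟩ : (X:ℤ[X])^2 ∣ q1 :=
    X_pow_dvd_iff.mpr (by intro d hd; interval_cases d; exacts [h10, h11])
  refine ⟨s, ?_⟩
  have key : (X + 1)^p - X^p - 1 - C (p:ℤ) * X = C (p:ℤ) * (X^2 * s) := by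
    rw [← hs, ← hq1]
  linear_combination key

open Fin.NatCast in
lemma shift_pow_apply (p : ℕ) [NeZero p] (R : Type*) [CommRing R] (k : ℕ)
    (v : Fin p → R) (i : Fin p) : ((shiftLM p R ^ k) v) i = v (i + (k : Fin p)) := by
  induction k generalizing v i with
  | zero => simp
  | succ k ih =>
      rw [pow_succ, Module.End.mul_apply, ih]
      show v (i + (k:Fin p) + 1) = _
      rw [Nat.cast_add, Nat.cast_one, add_assoc]

open Fin.NatCast in
lemma shift_pow_self (p : ℕ) [NeZero p] (R : Type*) [CommRing R] :
    (shiftLM p R : Module.End R (Fin p → R)) ^ p = 1 := by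
  apply LinearMap.ext; intro v
  funext i
  rw [shift_pow_apply, Fin.natCast_self, add_zero]
  rfl

open Fin.NatCast in
lemma mem_range_tau_iff (p : ℕ) [NeZero p] (hp : 1 < p) (R : Type*) [CommRing R]
    (v : Fin p → R) :
    v ∈ LinearMap.range (shiftLM p R - LinearMap.id :
      Module.End R (Fin p → R)) ↔ ∑ i, v i = 0 := by
  have happ : ∀ (w : Fin p → R) (i : Fin p),
      ((shiftLM p R - LinearMap.id : Module.End R (Fin p → R)) w) i = w (i + 1) - w i :=
    fun _ _ => rfl
  have hval : ∀ i : Fin p, (i + 1).val = (i.val + 1) % p := by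
    intro i
    rw [Fin.val_add, Fin.val_one', Nat.mod_eq_of_lt hp]
  constructor
  · rintro ⟨w, rfl⟩
    simp only [happ, Finset.sum_sub_distrib]
    rw [sub_eq_zero]
    exact Fintype.sum_equiv (Equiv.addRight (1 : Fin p)) _ w (fun i => rfl)
  · intro hsum
    refine ⟨fun i => ∑ j ∈ Finset.range i.val, v (j : Fin p), ?_⟩
    funext i
    rw [happ]
    have hsum' : ∑ j ∈ Finset.range p, v (j : Fin p) = 0 := by
      rw [← hsum, ← Fin.sum_univ_eq_sum_range (fun j => v (j : Fin p)) p]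
      exact Finset.sum_congr rfl fun i _ => by rw [Fin.cast_val_eq_self]
    rcases eq_or_lt_of_le (Nat.succ_le_of_lt i.isLt) with hi | hi
    · -- i.val + 1 = p
      have hip : i.val + 1 = p := hi
      have h1 : (i + 1).val = 0 := by rw [hval, hip, Nat.mod_self]
      rw [h1]
      simp only [Finset.range_zero, Finset.sum_empty]
      have h2 : ∑ j ∈ Finset.range (i.val + 1), v (j : Fin p) = 0 := by
        rw [hip]; exact hsum'
      rw [Finset.sum_range_succ, Fin.cast_val_eq_self] at h2
      linear_combination -h2
    · have h1 : (i + 1).val = i.val + 1 := by rw [hval, Nat.mod_eq_of_lt hi]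
      rw [h1, Finset.sum_range_succ, Fin.cast_val_eq_self]
      ring

lemma zmod_dvd (m a b : ℕ) [NeZero m] (hm : m = a * b) (ha : a ≠ 0) (x : ZMod m)
    (h : (a : ZMod m) * x = 0) : ∃ y : ZMod m, x = (b : ZMod m) * y := by
  have hx : ((x.val : ℕ) : ZMod m) = x := ZMod.natCast_val x |>.trans (ZMod.cast_id _ x)
  rw [← hx, ← Nat.cast_mul, ZMod.natCast_eq_zero_iff] at h
  have h' : b ∣ x.val := by
    have hab : a * b ∣ a * x.val := by rw [← hm]; exact h
    exact (Nat.mul_dvd_mul_iff_left (Nat.pos_of_ne_zero ha)).mp hab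
  obtain ⟨t, ht⟩ := h'
  have hbt : ((b * t : ℕ) : ZMod m) = x := by rw [← ht, hx]
  exact ⟨(t : ZMod m), by rw [← hbt, Nat.cast_mul]⟩

lemma main_aux (p n : ℕ) (hp : p.Prime) (hn : 1 ≤ n) [NeZero p] [NeZero (p ^ n)]
    (τ : Module.End (ZMod (p ^ n)) (Fin p → ZMod (p ^ n)))
    (hτdef : τ = shiftLM p (ZMod (p ^ n)) - LinearMap.id) :
    ∀ v : Fin p → ZMod (p ^ n),
      v ∈ LinearMap.range (τ ^ p) ↔
        v ∈ LinearMap.range τ ∧ p ^ (n - 1) • v = 0 := by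
  intro v
  have hpn1 : p ^ (n - 1) * p = p ^ n := by rw [← pow_succ]; congr 1; omega
  have hpn2 : p * p ^ (n - 1) = p ^ n := by rw [← hpn1]; ring
  obtain ⟨s, hs⟩ := key_poly p hp
  set S : Module.End (ZMod (p ^ n)) (Fin p → ZMod (p ^ n)) :=
    Polynomial.aeval τ s with hS
  have hcomm : ∀ f : Polynomial ℤ, Commute τ (Polynomial.aeval τ f) := by
    intro f
    have h : Polynomial.aeval τ (Polynomial.X * f) = Polynomial.aeval τ (f * Polynomial.X) := by
      rw [mul_comm]
    simp only [map_mul, Polynomial.aeval_X] at h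
    exact h
  have hσ : τ + 1 = (shiftLM p (ZMod (p ^ n)) :
      Module.End (ZMod (p ^ n)) (Fin p → ZMod (p ^ n))) := by
    rw [hτdef, Module.End.one_eq_id]; abel
  have haeval := congrArg (Polynomial.aeval τ) hs
  simp only [map_pow, map_add, map_mul, map_one, Polynomial.aeval_X,
    Polynomial.aeval_C, map_intCast, map_natCast, eq_intCast, Int.cast_natCast] at haeval
  rw [hσ, shift_pow_self] at haeval
  -- haeval : 1 = τ^p + 1 + (p:E) * τ * (1 + τ * S)
  have h3 : τ ^ p + (p : Module.End (ZMod (p ^ n)) (Fin p → ZMod (p ^ n))) * τ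
      * (1 + τ * S) = 0 := by
    have h := haeval.symm
    rw [add_right_comm] at h
    have h' : τ ^ p + (p : Module.End (ZMod (p ^ n)) (Fin p → ZMod (p ^ n))) * τ
        * (1 + τ * S) + 1 = 0 + 1 := by rw [h, zero_add]
    exact add_right_cancel h'
  have hfact : τ ^ p = (p : Module.End (ZMod (p ^ n)) (Fin p → ZMod (p ^ n))) * τ * (-(1 + τ * S)) := by
    exact (eq_neg_of_add_eq_zero_left h3).trans (mul_neg (α := Module.End (ZMod (p ^ n)) (Fin p → ZMod (p ^ n))) _ _).symm
  have hpEn : ((p : ℕ) : Module.End (ZMod (p ^ n)) (Fin p → ZMod (p ^ n))) ^ n = 0 := by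
    rw [← Nat.cast_pow,
      ← map_natCast (algebraMap (ZMod (p ^ n))
        (Module.End (ZMod (p ^ n)) (Fin p → ZMod (p ^ n)))) (p ^ n),
      ZMod.natCast_self, map_zero]
  have hτnil : IsNilpotent τ := by
    refine ⟨p * n, ?_⟩
    rw [pow_mul, hfact, mul_assoc,
      (Nat.cast_commute (p : ℕ) (τ * (-(1 + τ * S)))).mul_pow, hpEn, zero_mul]
  have hrhou : IsUnit (-(1 + τ * S)) := by
    have hnilτS : IsNilpotent (τ * S) := (hcomm s).isNilpotent_mul_right hτnil
    exact hnilτS.isUnit_one_add.neg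
  have hrange1 : LinearMap.range (τ ^ p)
      = LinearMap.range ((p : Module.End (ZMod (p ^ n)) (Fin p → ZMod (p ^ n))) * τ) := by
    rw [hfact, Module.End.mul_eq_comp]
    apply LinearMap.range_comp_of_range_eq_top
    rw [LinearMap.range_eq_top]
    exact ((Module.End.isUnit_iff (-(1 + τ * S))).mp hrhou).surjective
  rw [hrange1]
  constructor
  · rintro ⟨w, rfl⟩
    have happ : ((p : Module.End (ZMod (p ^ n)) (Fin p → ZMod (p ^ n))) * τ) w
        = (p : ℕ) • τ w := by
      rw [Module.End.mul_apply, Module.End.natCast_apply]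
    constructor
    · rw [happ]
      exact ⟨(p : ℕ) • w, map_nsmul τ p w⟩
    · rw [happ, smul_smul, hpn1]
      funext i
      show (p ^ n : ℕ) • τ w i = (0 : Fin p → ZMod (p ^ n)) i
      rw [nsmul_eq_mul, ZMod.natCast_self, zero_mul, Pi.zero_apply]
  · rintro ⟨hv, hvkill⟩
    rw [hτdef] at hv
    have hvsum : ∑ i, v i = 0 := (mem_range_tau_iff p hp.one_lt (ZMod (p ^ n)) v).mp hv
    have hcoord : ∀ i, ∃ y : ZMod (p ^ n), v i = ((p : ℕ) : ZMod (p ^ n)) * y := by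
      intro i
      refine zmod_dvd (p ^ n) (p ^ (n - 1)) p hpn1.symm (pow_ne_zero _ hp.ne_zero) (v i) ?_
      have := congrFun hvkill i
      rwa [Pi.smul_apply, nsmul_eq_mul, Pi.zero_apply] at this
    choose u hu using hcoord
    have husum : ((p : ℕ) : ZMod (p ^ n)) * ∑ i, u i = 0 := by
      rw [Finset.mul_sum]
      rw [show ∑ i, ((p : ℕ) : ZMod (p ^ n)) * u i = ∑ i, v i from
        Finset.sum_congr rfl fun i _ => (hu i).symm]
      exact hvsum
    obtain ⟨c, hc⟩ := zmod_dvd (p ^ n) p (p ^ (n - 1)) hpn2.symm hp.ne_zero _ husum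
    set g : Fin p → ZMod (p ^ n) :=
      Pi.single (0 : Fin p) (((p ^ (n - 1) : ℕ) : ZMod (p ^ n)) * c) with hg
    have hu'sum : ∑ i, (u - g) i = 0 := by
      simp only [Pi.sub_apply, Finset.sum_sub_distrib]
      rw [hg, Fintype.sum_pi_single' (0 : Fin p), ← hc, sub_self]
    obtain ⟨w', hw'⟩ := (mem_range_tau_iff p hp.one_lt (ZMod (p ^ n)) (u - g)).mpr hu'sum
    refine ⟨w', ?_⟩
    rw [Module.End.mul_apply, Module.End.natCast_apply, hτdef, hw']
    funext i
    show (p : ℕ) • (u - g) i = v i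
    rw [Pi.sub_apply, nsmul_eq_mul, mul_sub]
    have hgz : ((p : ℕ) : ZMod (p ^ n)) * g i = 0 := by
      rcases eq_or_ne i 0 with rfl | hi
      · rw [hg, Pi.single_eq_same, ← mul_assoc, ← Nat.cast_mul, hpn2, ZMod.natCast_self,
          zero_mul]
      · rw [hg, Pi.single_eq_of_ne hi, mul_zero]
    rw [hgz, sub_zero, ← hu]

/-- For `p` an odd prime and `n ≥ 1`, on `V = Fin p → ZMod (p ^ n)` the image of
`(σ - id) ^ p` (where `σ` is the cyclic shift) consists exactly of the elements of the
image of `σ - id` killed by `p ^ (n - 1)`. -/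
theorem range_shift_sub_id_pow (p n : ℕ) (hp : p.Prime) (hodd : p ≠ 2) (hn : 1 ≤ n)
    [NeZero p] :
    ∀ v : Fin p → ZMod (p ^ n),
      v ∈ LinearMap.range
          ((shiftLM p (ZMod (p ^ n)) - LinearMap.id : Module.End (ZMod (p ^ n))
            (Fin p → ZMod (p ^ n))) ^ p) ↔
        v ∈ LinearMap.range
            (shiftLM p (ZMod (p ^ n)) - LinearMap.id : Module.End (ZMod (p ^ n))
              (Fin p → ZMod (p ^ n))) ∧
          p ^ (n - 1) • v = 0 := by
  haveI : NeZero (p ^ n) := ⟨pow_ne_zero _ hp.ne_zero⟩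
  exact main_aux p n hp hn _ rfl
end

section
/- Let p be an odd prime and n ≥ 1. Let V be the additive group of functions from Fin p to ZMod(p^n), let σ be the automorphism of V cyclically shifting coordinates, and let W be the semidirect product V ⋊ ZMod(p), where k ∈ ZMod(p) acts on V as σ^k (so W is isomorphic to the regular wreath product C_{p^n} ≀ C_p). Then W is nilpotent of nilpotence class exactly n(p-1)+1. -/
open Fin.NatCast Fin.CommRing
open scoped commutatorElement

open Polynomial in
theorem wreath_aux_poly (p : ℕ) (hp : p.Prime) :
    ∃ g h : Polynomial ℤ, (X - 1 : ℤ[X]) ^ p = X ^ p - 1 + C (p : ℤ) * ((X - 1) * g) ∧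
      g = -1 + (X - 1) * h := by
  haveI : Fact p.Prime := ⟨hp⟩
  set F : ℤ[X] := (X - 1) ^ p - (X ^ p - 1) with hF
  have hmap : F.map (Int.castRingHom (ZMod p)) = 0 := by
    simp only [hF, Polynomial.map_sub, Polynomial.map_pow, Polynomial.map_one, Polynomial.map_X]
    rw [sub_pow_char, one_pow]
    ring
  have hdvd : C (p : ℤ) ∣ F := by
    rw [C_dvd_iff_dvd_coeff]
    intro i
    have h := congrArg (fun q => Polynomial.coeff q i) hmap
    simp only [Polynomial.coeff_map, Polynomial.coeff_zero] at h
    have := (ZMod.intCast_zmod_eq_zero_iff_dvd (F.coeff i) p).mp h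
    exact_mod_cast this
  obtain ⟨f, hf⟩ := hdvd
  have hp0 : (p : ℤ) ≠ 0 := by exact_mod_cast hp.ne_zero
  have hf1 : f.eval 1 = 0 := by
    have hFe : F.eval 1 = 0 := by simp [hF, hp.ne_zero]
    rw [hf] at hFe
    simp only [eval_mul, eval_C] at hFe
    exact (mul_eq_zero.mp hFe).resolve_left hp0
  obtain ⟨g, hg⟩ := (dvd_iff_isRoot (p := f) (a := 1)).mpr hf1
  rw [C_1] at hg
  have hg1 : g.eval 1 = -1 := by
    have hd : derivative F = C (p : ℤ) * derivative f := by
      rw [hf, derivative_C_mul]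
    have hd1 : (derivative F).eval 1 = -(p : ℤ) := by
      simp only [hF, derivative_sub, derivative_pow, derivative_one, derivative_X, eval_sub,
        eval_mul, eval_pow, eval_sub, eval_C, eval_X, eval_natCast, eval_one, sub_self, mul_one, eval_zero]
      have hpm : p - 1 ≠ 0 := by have := hp.two_le; omega
      rw [zero_pow hpm]
      ring
    have hd2 : (derivative f).eval 1 = g.eval 1 := by
      rw [hg, derivative_mul]
      simp
    rw [hd] at hd1
    simp only [eval_mul, eval_C, hd2] at hd1
    have : (p : ℤ) * g.eval 1 = (p : ℤ) * (-1) := by linarith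
    exact mul_left_cancel₀ hp0 this
  have hgd : (X - 1 : ℤ[X]) ∣ (g + 1) := by
    rw [show (X - 1 : ℤ[X]) = X - C 1 by rw [C_1], dvd_iff_isRoot]
    simp [IsRoot, hg1]
  obtain ⟨h, hh⟩ := hgd
  refine ⟨g, h, ?_, by linear_combination hh⟩
  have : F = C (p:ℤ) * ((X - 1) * g) := by rw [hf, hg]
  rw [hF] at this
  linear_combination this

theorem wreath_Xpow {p : ℕ} [NeZero p] {A : Type*} [Semiring A] (j : ℕ) :
    (AddMonoidAlgebra.single (-1 : Fin p) (1 : A)) ^ j =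
      AddMonoidAlgebra.single (-(j : Fin p)) (1 : A) := by
  rw [AddMonoidAlgebra.single_pow, one_pow]
  congr 1
  rw [nsmul_eq_mul, mul_neg_one]

theorem wreath_ring (p n : ℕ) (hp : p.Prime) (hodd : p ≠ 2) (hn : 1 ≤ n) [NeZero p] :
    (AddMonoidAlgebra.single (-1 : Fin p) (1 : ZMod (p ^ n)) - 1) ^ (n * (p - 1) + 1) = 0 ∧
      (AddMonoidAlgebra.single (-1 : Fin p) (1 : ZMod (p ^ n)) - 1) ^ (n * (p - 1)) ≠ 0 := by
  haveI : Fact p.Prime := ⟨hp⟩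
  set A := ZMod (p ^ n) with hA
  set R := AddMonoidAlgebra A (Fin p) with hR
  set Xr : R := AddMonoidAlgebra.single (-1 : Fin p) (1 : A) with hXr
  set y : R := Xr - 1 with hy
  have hXp : Xr ^ p = 1 := by
    rw [hXr, wreath_Xpow, Fin.natCast_self, neg_zero]
    rfl
  obtain ⟨g, h, hpoly, hg⟩ := wreath_aux_poly p hp
  set G : R := Polynomial.aeval Xr g with hG
  set H : R := Polynomial.aeval Xr h with hH
  have h1 : y ^ p = (p : R) * (y * G) := by
    have h2 := congrArg (Polynomial.aeval Xr) hpoly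
    simp only [map_pow, map_sub, map_add, map_mul, map_one, Polynomial.aeval_X,
      Polynomial.aeval_C] at h2
    rw [hXp] at h2
    rw [hy, h2]
    push_cast
    ring
  have hGe : G = -1 + y * H := by
    have h3 := congrArg (Polynomial.aeval Xr) hg
    simp only [map_add, map_mul, map_neg, map_one, map_sub, Polynomial.aeval_X] at h3
    rw [hG, hy, h3]
  have chain : ∀ m : ℕ, y ^ (m * (p - 1) + 1) = (p : R) ^ m * G ^ m * y := by
    intro m
    induction m with
    | zero => simp
    | succ m ih =>
      have e1 : (m + 1) * (p - 1) + 1 = (m * (p - 1) + 1) + (p - 1) := by ring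
      have e2 : y * y ^ (p - 1) = y ^ p := by
        rw [← pow_succ']
        congr 1
        have := hp.two_le; omega
      rw [e1, pow_add, ih, mul_assoc ((p : R) ^ m * G ^ m) y, e2, h1]
      ring
  have hpncast : (p : R) ^ n = 0 := by
    rw [← Nat.cast_pow]
    have h4 : ((p ^ n : ℕ) : A) = 0 := by exact_mod_cast ZMod.natCast_self (p ^ n)
    calc ((p ^ n : ℕ) : R) = algebraMap A R ((p ^ n : ℕ) : A) := by rw [map_natCast]
    _ = 0 := by rw [h4, map_zero]
  have htop : y ^ (n * (p - 1) + 1) = 0 := by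
    rw [chain n, hpncast]
    ring
  refine ⟨htop, ?_⟩
  intro h0
  have hynil : IsNilpotent y := ⟨_, htop⟩
  have hGu : IsUnit G := by
    rw [hGe]
    exact IsNilpotent.isUnit_add_left_of_commute
      ((Commute.all y H).isNilpotent_mul_right hynil) isUnit_one.neg (Commute.all _ _)
  obtain ⟨n', rfl⟩ : ∃ n', n = n' + 1 := ⟨n - 1, by omega⟩
  have hsplit : (n' + 1) * (p - 1) = (n' * (p - 1) + 1) + (p - 2) := by
    have h2 := hp.two_le
    have e : (n' + 1) * (p - 1) = n' * (p - 1) + (p - 1) := by ring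
    rw [e]
    generalize n' * (p - 1) = T
    omega
  have e2 : y * y ^ (p - 2) = y ^ (p - 1) := by
    rw [← pow_succ']
    congr 1
    have := hp.two_le; omega
  have hc2 : ((p : R) ^ n' * y ^ (p - 1)) * G ^ n' = 0 := by
    calc ((p : R) ^ n' * y ^ (p - 1)) * G ^ n'
        = (p : R) ^ n' * (y * y ^ (p - 2)) * G ^ n' := by rw [e2]
      _ = ((p : R) ^ n' * G ^ n' * y) * y ^ (p - 2) := by ring
      _ = y ^ (n' * (p - 1) + 1) * y ^ (p - 2) := by rw [chain n']
      _ = y ^ ((n' * (p - 1) + 1) + (p - 2)) := (pow_add y _ _).symm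
      _ = y ^ ((n' + 1) * (p - 1)) := by rw [hsplit]
      _ = 0 := h0
  have hcancel : (p : R) ^ n' * y ^ (p - 1) = 0 := (IsUnit.mul_left_eq_zero (hGu.pow n')).mp hc2
  have hrange : p - 1 + 1 = p := by have := hp.two_le; omega
  have hcast : ∀ a : A, (algebraMap A R) a = AddMonoidAlgebra.single (0 : Fin p) a := by
    intro a
    rw [AddMonoidAlgebra.coe_algebraMap]
    simp
  have hterm : ∀ m : ℕ, (p : R) ^ n' *
      ((-1) ^ (m + (p - 1)) * Xr ^ m * (1 : R) ^ (p - 1 - m) * ((p - 1).choose m : R))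
      = AddMonoidAlgebra.single (-(m : Fin p))
          ((p : A) ^ n' * ((-1) ^ (m + (p - 1)) * ((p - 1).choose m : A))) := by
    intro m
    have cp : (p : R) ^ n' = AddMonoidAlgebra.single (0 : Fin p) ((p : A) ^ n') := by
      rw [← map_natCast (algebraMap A R) p, ← map_pow, hcast]
    have ce : ((-1 : R)) ^ (m + (p - 1)) =
        AddMonoidAlgebra.single (0 : Fin p) ((-1 : A) ^ (m + (p - 1))) := by
      rw [← map_one (algebraMap A R), ← map_neg, ← map_pow, hcast]
    have cc : (((p - 1).choose m : ℕ) : R) =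
        AddMonoidAlgebra.single (0 : Fin p) (((p - 1).choose m : ℕ) : A) := by
      rw [← map_natCast (algebraMap A R), hcast]
    rw [hXr, wreath_Xpow, one_pow, mul_one, cp, ce, cc,
      AddMonoidAlgebra.single_mul_single, AddMonoidAlgebra.single_mul_single,
      AddMonoidAlgebra.single_mul_single]
    simp only [zero_add, add_zero, mul_one]
  have hexp : (p : R) ^ n' * y ^ (p - 1) =
      ∑ m ∈ Finset.range p, AddMonoidAlgebra.single (-(m : Fin p))
        ((p : A) ^ n' * ((-1) ^ (m + (p - 1)) * ((p - 1).choose m : A))) := by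
    rw [hy, sub_pow, hrange, Finset.mul_sum]
    exact Finset.sum_congr rfl fun m _ => hterm m
  have hsum0 : (∑ m ∈ Finset.range p, AddMonoidAlgebra.single (-(m : Fin p))
      ((p : A) ^ n' * ((-1) ^ (m + (p - 1)) * ((p - 1).choose m : A)))) = 0 := by
    rw [← hexp]; exact hcancel
  have hzero : ∀ m ∈ Finset.range p, m ≠ 0 →
      (AddMonoidAlgebra.single (-(m : Fin p))
        ((p : A) ^ n' * ((-1) ^ (m + (p - 1)) * ((p - 1).choose m : A)))).coeff (0 : Fin p) = 0 := by
    intro m hm hm0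
    rw [AddMonoidAlgebra.coeff_single]
    apply Finsupp.single_eq_of_ne'
    intro hcontra
    rw [neg_eq_zero, Fin.natCast_eq_zero] at hcontra
    exact absurd (Nat.le_of_dvd (Nat.pos_of_ne_zero hm0) hcontra)
      (Nat.not_le.mpr (Finset.mem_range.mp hm))
  have h6 : (∑ m ∈ Finset.range p, AddMonoidAlgebra.single (-(m : Fin p))
      ((p : A) ^ n' * ((-1) ^ (m + (p - 1)) * ((p - 1).choose m : A)))).coeff (0 : Fin p) = 0 := by
    rw [hsum0]; rfl
  rw [AddMonoidAlgebra.coeff_sum, Finsupp.finset_sum_apply] at h6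
  rw [Finset.sum_eq_single_of_mem 0 (Finset.mem_range.mpr hp.pos) hzero] at h6
  simp only [Nat.cast_zero, neg_zero, AddMonoidAlgebra.coeff_single, Finsupp.single_eq_same] at h6
  have hne1 : (-1 : A) ^ (0 + (p - 1)) = 1 := by
    rw [zero_add]
    exact Even.neg_one_pow (Nat.Odd.sub_odd (hp.odd_of_ne_two hodd) odd_one)
  rw [hne1, Nat.choose_zero_right, Nat.cast_one, mul_one, mul_one] at h6
  haveI : NeZero (p ^ (n' + 1)) := ⟨pow_ne_zero _ hp.ne_zero⟩
  have h7 : ((p ^ n' : ℕ) : A) = 0 := by push_cast; exact h6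
  have h8 : p ^ (n' + 1) ∣ p ^ n' :=
    (ZMod.natCast_eq_zero_iff (p ^ n') (p ^ (n' + 1))).mp h7
  exact absurd (Nat.le_of_dvd (pow_pos hp.pos n') h8)
    (not_le.mpr (Nat.pow_lt_pow_right hp.one_lt (by omega)))


noncomputable def wE (p n : ℕ) [NeZero p] :
    (Fin p → ZMod (p ^ n)) ≃+ AddMonoidAlgebra (ZMod (p ^ n)) (Fin p) :=
  Finsupp.addEquivFunOnFinite.symm.trans AddMonoidAlgebra.coeffAddEquiv.symm

theorem wE_apply (p n : ℕ) [NeZero p] (v : Fin p → ZMod (p ^ n)) (i : Fin p) :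
    (wE p n v).coeff i = v i := rfl

theorem wreath_Xpow' {p : ℕ} [NeZero p] {A : Type*} [Semiring A] (j : ℕ) :
    (AddMonoidAlgebra.single (-1 : Fin p) (1 : A)) ^ j =
      AddMonoidAlgebra.single (-(j : Fin p)) (1 : A) := by
  rw [AddMonoidAlgebra.single_pow, one_pow]
  congr 1
  rw [nsmul_eq_mul, mul_neg_one]

theorem wreath_Xp (p n : ℕ) [NeZero p] :
    (AddMonoidAlgebra.single (-1 : Fin p) (1 : ZMod (p ^ n))) ^ p = 1 := by
  rw [wreath_Xpow', Fin.natCast_self, neg_zero]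
  rfl

theorem wreath_Xmod (p n : ℕ) [NeZero p] (j : ℕ) :
    (AddMonoidAlgebra.single (-1 : Fin p) (1 : ZMod (p ^ n))) ^ (j % p) =
      (AddMonoidAlgebra.single (-1 : Fin p) (1 : ZMod (p ^ n))) ^ j := by
  conv_rhs => rw [← Nat.div_add_mod j p]
  rw [pow_add, pow_mul, wreath_Xp, one_pow, one_mul]

theorem wreath_Zadd (p n : ℕ) [NeZero p] (z w : ZMod p) :
    (AddMonoidAlgebra.single (-1 : Fin p) (1 : ZMod (p ^ n))) ^ (z + w).val =
      (AddMonoidAlgebra.single (-1 : Fin p) (1 : ZMod (p ^ n))) ^ z.val *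
        (AddMonoidAlgebra.single (-1 : Fin p) (1 : ZMod (p ^ n))) ^ w.val := by
  rw [ZMod.val_add, wreath_Xmod, pow_add]

theorem wreath_Zneg (p n : ℕ) [NeZero p] (z : ZMod p) :
    (AddMonoidAlgebra.single (-1 : Fin p) (1 : ZMod (p ^ n))) ^ (-z).val *
      (AddMonoidAlgebra.single (-1 : Fin p) (1 : ZMod (p ^ n))) ^ z.val = 1 := by
  rw [← wreath_Zadd, neg_add_cancel, ZMod.val_zero, pow_zero]

theorem wreath_act (p n : ℕ) [NeZero p]
    (φ : Multiplicative (ZMod p) →* MulAut (Multiplicative (Fin p → ZMod (p ^ n))))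
    (hφ : ∀ (k : ZMod p) (v : Fin p → ZMod (p ^ n)) (i : Fin p),
      Multiplicative.toAdd (φ (Multiplicative.ofAdd k) (Multiplicative.ofAdd v)) i =
        v (i + (k.val : Fin p)))
    (c : Multiplicative (ZMod p)) (m : Multiplicative (Fin p → ZMod (p ^ n))) :
    wE p n (Multiplicative.toAdd (φ c m)) =
      (AddMonoidAlgebra.single (-1 : Fin p) (1 : ZMod (p ^ n))) ^ (Multiplicative.toAdd c).val *
        wE p n (Multiplicative.toAdd m) := by
  rw [wreath_Xpow']
  refine AddMonoidAlgebra.ext (Finsupp.ext fun i => ?_)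
  rw [AddMonoidAlgebra.coeff_single_mul_apply, one_mul, neg_neg]
  have h1 := hφ (Multiplicative.toAdd c) (Multiplicative.toAdd m) i
  rw [show Multiplicative.ofAdd (Multiplicative.toAdd c) = c from rfl,
    show Multiplicative.ofAdd (Multiplicative.toAdd m) = m from rfl] at h1
  rw [wE_apply, wE_apply, h1, add_comm]

theorem wreath_comm_right (p n : ℕ) [NeZero p]
    (φ : Multiplicative (ZMod p) →* MulAut (Multiplicative (Fin p → ZMod (p ^ n))))
    (g h : SemidirectProduct (Multiplicative (Fin p → ZMod (p ^ n)))
      (Multiplicative (ZMod p)) φ) :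
    ⁅g, h⁆.right = 1 := by
  show ⁅g, h⁆.right = 1
  have : ⁅g, h⁆.right = ⁅g.right, h.right⁆ := by
    rw [commutatorElement_def, commutatorElement_def]
    simp only [SemidirectProduct.mul_right, SemidirectProduct.inv_right]
  rw [this]
  exact commutatorElement_eq_one_iff_mul_comm.mpr (mul_comm _ _)

theorem wreath_comm_left (p n : ℕ) [NeZero p]
    (φ : Multiplicative (ZMod p) →* MulAut (Multiplicative (Fin p → ZMod (p ^ n))))
    (hφ : ∀ (k : ZMod p) (v : Fin p → ZMod (p ^ n)) (i : Fin p),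
      Multiplicative.toAdd (φ (Multiplicative.ofAdd k) (Multiplicative.ofAdd v)) i =
        v (i + (k.val : Fin p)))
    (g h : SemidirectProduct (Multiplicative (Fin p → ZMod (p ^ n)))
      (Multiplicative (ZMod p)) φ) :
    wE p n (Multiplicative.toAdd ⁅g, h⁆.left) =
      (1 - (AddMonoidAlgebra.single (-1 : Fin p) (1 : ZMod (p ^ n)))
          ^ (Multiplicative.toAdd h.right).val) * wE p n (Multiplicative.toAdd g.left) +
        ((AddMonoidAlgebra.single (-1 : Fin p) (1 : ZMod (p ^ n)))
          ^ (Multiplicative.toAdd g.right).val - 1) * wE p n (Multiplicative.toAdd h.left) := by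
  set X : AddMonoidAlgebra (ZMod (p ^ n)) (Fin p) :=
    AddMonoidAlgebra.single (-1 : Fin p) (1 : ZMod (p ^ n)) with hX
  have hEmul : ∀ a b : SemidirectProduct (Multiplicative (Fin p → ZMod (p ^ n)))
      (Multiplicative (ZMod p)) φ,
      wE p n (Multiplicative.toAdd (a * b).left) =
        wE p n (Multiplicative.toAdd a.left) +
          X ^ (Multiplicative.toAdd a.right).val * wE p n (Multiplicative.toAdd b.left) := by
    intro a b
    rw [SemidirectProduct.mul_left, toAdd_mul, map_add, wreath_act p n φ hφ]
  have hEinv : ∀ a : SemidirectProduct (Multiplicative (Fin p → ZMod (p ^ n)))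
      (Multiplicative (ZMod p)) φ,
      wE p n (Multiplicative.toAdd a⁻¹.left) =
        X ^ (-(Multiplicative.toAdd a.right)).val *
          (- wE p n (Multiplicative.toAdd a.left)) := by
    intro a
    rw [SemidirectProduct.inv_left, wreath_act p n φ hφ, toAdd_inv, toAdd_inv, map_neg]
  rw [commutatorElement_def]
  rw [hEmul (g * h * g⁻¹) h⁻¹, hEmul (g * h) g⁻¹, hEmul g h, hEinv g, hEinv h]
  simp only [SemidirectProduct.mul_right, SemidirectProduct.inv_right, toAdd_mul, toAdd_inv]
  set a := Multiplicative.toAdd g.right with ha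
  set b := Multiplicative.toAdd h.right with hb
  rw [wreath_Zadd p n (a + b) (-a), wreath_Zadd p n a b]
  have hna := wreath_Zneg p n a
  have hnb := wreath_Zneg p n b
  set Eg := wE p n (Multiplicative.toAdd g.left)
  set Eh := wE p n (Multiplicative.toAdd h.left)
  set Xa := X ^ a.val
  set Xb := X ^ b.val
  set Ka := X ^ (-a).val
  set Kb := X ^ (-b).val
  linear_combination (-(Xb * Eg) - Eh) * hna - Eh * Xa * Ka * hnb

def wL (p n : ℕ) [NeZero p]
    (φ : Multiplicative (ZMod p) →* MulAut (Multiplicative (Fin p → ZMod (p ^ n))))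
    (k : ℕ) : Subgroup (SemidirectProduct (Multiplicative (Fin p → ZMod (p ^ n)))
      (Multiplicative (ZMod p)) φ) where
  carrier := {g | (AddMonoidAlgebra.single (-1 : Fin p) (1 : ZMod (p ^ n)) - 1) ^ k ∣
      wE p n (Multiplicative.toAdd g.left) ∧ g.right = 1}
  one_mem' := by
    refine ⟨?_, rfl⟩
    rw [SemidirectProduct.one_left, toAdd_one, map_zero]
    exact dvd_zero _
  mul_mem' := by
    rintro a b ⟨ha1, ha2⟩ ⟨hb1, hb2⟩
    refine ⟨?_, by rw [SemidirectProduct.mul_right, ha2, hb2, mul_one]⟩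
    rw [SemidirectProduct.mul_left, ha2, map_one, MulAut.one_apply, toAdd_mul, map_add]
    exact dvd_add ha1 hb1
  inv_mem' := by
    rintro a ⟨ha1, ha2⟩
    refine ⟨?_, by rw [SemidirectProduct.inv_right, ha2, inv_one]⟩
    rw [SemidirectProduct.inv_left, ha2, inv_one, map_one, MulAut.one_apply, toAdd_inv, map_neg]
    exact (dvd_neg).mpr ha1

theorem wreath_dvd_geom (p n : ℕ) [NeZero p] (j : ℕ) :
    (AddMonoidAlgebra.single (-1 : Fin p) (1 : ZMod (p ^ n)) - 1) ∣
      (1 - AddMonoidAlgebra.single (-1 : Fin p) (1 : ZMod (p ^ n)) ^ j) := by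
  rw [show (1 - AddMonoidAlgebra.single (-1 : Fin p) (1 : ZMod (p ^ n)) ^ j) =
    -(AddMonoidAlgebra.single (-1 : Fin p) (1 : ZMod (p ^ n)) ^ j - 1) by ring]
  exact (dvd_neg).mpr ⟨∑ i ∈ Finset.range j,
    AddMonoidAlgebra.single (-1 : Fin p) (1 : ZMod (p ^ n)) ^ i,
    by rw [mul_comm]; exact (geom_sum_mul _ j).symm⟩

theorem wreath_lcs_upper (p n : ℕ) [NeZero p]
    (φ : Multiplicative (ZMod p) →* MulAut (Multiplicative (Fin p → ZMod (p ^ n))))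
    (hφ : ∀ (k : ZMod p) (v : Fin p → ZMod (p ^ n)) (i : Fin p),
      Multiplicative.toAdd (φ (Multiplicative.ofAdd k) (Multiplicative.ofAdd v)) i =
        v (i + (k.val : Fin p))) :
    ∀ k : ℕ, lowerCentralSeries (⊤ : Subgroup (SemidirectProduct (Multiplicative (Fin p → ZMod (p ^ n)))
      (Multiplicative (ZMod p)) φ)) (k + 1) ≤ wL p n φ (k + 1) := by
  intro k
  induction k with
  | zero =>
    show ⁅(⊤ : Subgroup _), ⊤⁆ ≤ wL p n φ 1
    rw [Subgroup.commutator_le]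
    intro g _ h _
    refine ⟨?_, wreath_comm_right p n φ g h⟩
    rw [wreath_comm_left p n φ hφ g h, pow_one]
    refine dvd_add (dvd_mul_of_dvd_left ?_ _) (dvd_mul_of_dvd_left ?_ _)
    · exact wreath_dvd_geom p n _
    · rw [show (AddMonoidAlgebra.single (-1 : Fin p) (1 : ZMod (p ^ n))
        ^ (Multiplicative.toAdd g.right).val - 1) =
        -(1 - AddMonoidAlgebra.single (-1 : Fin p) (1 : ZMod (p ^ n))
          ^ (Multiplicative.toAdd g.right).val) by ring]
      exact (dvd_neg).mpr (wreath_dvd_geom p n _)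
  | succ k ih =>
    show ⁅lowerCentralSeries _ (k + 1), ⊤⁆ ≤ wL p n φ (k + 2)
    refine le_trans (Subgroup.commutator_mono ih le_rfl) ?_
    rw [Subgroup.commutator_le]
    rintro g ⟨hg1, hg2⟩ h _
    refine ⟨?_, wreath_comm_right p n φ g h⟩
    rw [wreath_comm_left p n φ hφ g h, hg2, toAdd_one, ZMod.val_zero, pow_zero, sub_self,
      zero_mul, add_zero]
    have := mul_dvd_mul (wreath_dvd_geom p n (Multiplicative.toAdd h.right).val) hg1
    rwa [← pow_succ'] at this

theorem wreath_lcs_lower (p n : ℕ) (hp : p.Prime) [NeZero p]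
    (φ : Multiplicative (ZMod p) →* MulAut (Multiplicative (Fin p → ZMod (p ^ n))))
    (hφ : ∀ (k : ZMod p) (v : Fin p → ZMod (p ^ n)) (i : Fin p),
      Multiplicative.toAdd (φ (Multiplicative.ofAdd k) (Multiplicative.ofAdd v)) i =
        v (i + (k.val : Fin p))) :
    ∀ (k : ℕ) (r : AddMonoidAlgebra (ZMod (p ^ n)) (Fin p)),
      SemidirectProduct.inl (Multiplicative.ofAdd ((wE p n).symm
        ((1 - AddMonoidAlgebra.single (-1 : Fin p) (1 : ZMod (p ^ n))) ^ k * r))) ∈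
        lowerCentralSeries (⊤ : Subgroup (SemidirectProduct (Multiplicative (Fin p → ZMod (p ^ n)))
          (Multiplicative (ZMod p)) φ)) k := by
  haveI : Fact (1 < p) := ⟨hp.one_lt⟩
  intro k
  induction k with
  | zero => exact fun r => Subgroup.mem_top _
  | succ k ih =>
    intro r
    set X : AddMonoidAlgebra (ZMod (p ^ n)) (Fin p) :=
      AddMonoidAlgebra.single (-1 : Fin p) (1 : ZMod (p ^ n)) with hX
    set u : AddMonoidAlgebra (ZMod (p ^ n)) (Fin p) := (1 - X) ^ k * r with hu
    set gk : SemidirectProduct (Multiplicative (Fin p → ZMod (p ^ n)))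
        (Multiplicative (ZMod p)) φ :=
      SemidirectProduct.inl (Multiplicative.ofAdd ((wE p n).symm u)) with hgk
    set t : SemidirectProduct (Multiplicative (Fin p → ZMod (p ^ n)))
        (Multiplicative (ZMod p)) φ :=
      SemidirectProduct.inr (Multiplicative.ofAdd (1 : ZMod p)) with ht
    have hmem : ⁅gk, t⁆ ∈ lowerCentralSeries (⊤ : Subgroup _) (k + 1) :=
      Subgroup.commutator_mem_commutator (ih r) (Subgroup.mem_top t)
    have heq : ⁅gk, t⁆ = SemidirectProduct.inl (Multiplicative.ofAdd ((wE p n).symm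
        ((1 - X) ^ (k + 1) * r))) := by
      have hr := wreath_comm_right p n φ gk t
      have hl := wreath_comm_left p n φ hφ gk t
      rw [hgk, ht] at hl
      rw [SemidirectProduct.right_inl, SemidirectProduct.left_inl,
        SemidirectProduct.right_inr, SemidirectProduct.left_inr] at hl
      rw [toAdd_one, ZMod.val_zero, pow_zero, sub_self, zero_mul, add_zero] at hl
      simp only [toAdd_ofAdd, ZMod.val_one, pow_one, AddEquiv.apply_symm_apply] at hl
      refine SemidirectProduct.ext ?_ ?_
      · rw [SemidirectProduct.left_inl]
        have h2 : wE p n (Multiplicative.toAdd ⁅gk, t⁆.left) =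
            wE p n ((wE p n).symm ((1 - X) ^ (k + 1) * r)) := by
          rw [AddEquiv.apply_symm_apply, hl, hu, pow_succ']
          ring
        have h3 := (wE p n).injective h2
        rw [← h3]
        rfl
      · rw [hr, SemidirectProduct.right_inl]
    rw [heq] at hmem
    exact hmem


/-- Let `V = Fin p → ZMod (p ^ n)` and let `φ` be the action of `ZMod p` on `V` in which
`k` acts as the `k`-fold cyclic coordinate shift `σ ^ k` (so that `V ⋊[φ] ZMod p` is the
regular wreath product `C_{p^n} ≀ C_p`). Then the semidirect product is nilpotent of
nilpotence class exactly `n(p-1)+1`. -/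
theorem nilpotencyClass_wreath (p n : ℕ) (hp : p.Prime) (hodd : p ≠ 2) (hn : 1 ≤ n)
    [NeZero p]
    (φ : Multiplicative (ZMod p) →* MulAut (Multiplicative (Fin p → ZMod (p ^ n))))
    (hφ : ∀ (k : ZMod p) (v : Fin p → ZMod (p ^ n)) (i : Fin p),
      Multiplicative.toAdd (φ (Multiplicative.ofAdd k) (Multiplicative.ofAdd v)) i =
        v (i + (Fin.ofNat p k.val))) :
    upperCentralSeries
        (SemidirectProduct (Multiplicative (Fin p → ZMod (p ^ n)))
          (Multiplicative (ZMod p)) φ) (n * (p - 1) + 1) = ⊤ ∧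
      upperCentralSeries
        (SemidirectProduct (Multiplicative (Fin p → ZMod (p ^ n)))
          (Multiplicative (ZMod p)) φ) (n * (p - 1)) ≠ ⊤ := by
  haveI : Fact p.Prime := ⟨hp⟩
  obtain ⟨hy0, hyN⟩ := wreath_ring p n hp hodd hn
  set N := n * (p - 1) with hN
  set W := SemidirectProduct (Multiplicative (Fin p → ZMod (p ^ n)))
    (Multiplicative (ZMod p)) φ with hW
  have hbot : lowerCentralSeries (⊤ : Subgroup W) (N + 1) = ⊥ := by
    rw [Subgroup.eq_bot_iff_forall]
    intro x hx
    obtain ⟨hdvd, hr⟩ := wreath_lcs_upper p n φ hφ N hx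
    rw [hy0, zero_dvd_iff] at hdvd
    have h1 : Multiplicative.toAdd x.left = 0 := by
      apply (wE p n).injective
      rw [hdvd, map_zero]
    refine SemidirectProduct.ext ?_ hr
    rw [SemidirectProduct.one_left]
    have h2 := congrArg Multiplicative.ofAdd h1
    rwa [ofAdd_zero, show Multiplicative.ofAdd (Multiplicative.toAdd x.left) = x.left
      from rfl] at h2
  have hne : lowerCentralSeries (⊤ : Subgroup W) N ≠ ⊥ := by
    intro hcon
    have hmem := wreath_lcs_lower p n hp φ hφ N 1
    rw [hcon, Subgroup.mem_bot] at hmem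
    have h1 : Multiplicative.ofAdd ((wE p n).symm
        ((1 - AddMonoidAlgebra.single (-1 : Fin p) (1 : ZMod (p ^ n))) ^ N * 1)) = 1 :=
      SemidirectProduct.inl_injective (by rw [hmem, map_one])
    have h2 : ((1 - AddMonoidAlgebra.single (-1 : Fin p) (1 : ZMod (p ^ n))) ^ N * 1) = 0 := by
      have h3 := congrArg Multiplicative.toAdd h1
      rw [toAdd_ofAdd, toAdd_one] at h3
      have h4 := congrArg (wE p n) h3
      rwa [AddEquiv.apply_symm_apply, map_zero] at h4
    rw [mul_one] at h2
    apply hyN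
    rw [show (1 - AddMonoidAlgebra.single (-1 : Fin p) (1 : ZMod (p ^ n))) =
      -(AddMonoidAlgebra.single (-1 : Fin p) (1 : ZMod (p ^ n)) - 1) by ring, neg_pow] at h2
    exact ((isUnit_one.neg.pow N).mul_right_eq_zero).mp h2
  haveI hnil : Group.IsNilpotent W := nilpotent_iff_lowerCentralSeries.mpr ⟨N + 1, hbot⟩
  constructor
  · exact upperCentralSeries_eq_top_iff_nilpotencyClass_le.mpr
      (lowerCentralSeries_eq_bot_iff_nilpotencyClass_le.mp hbot)
  · intro htop
    exact hne (lowerCentralSeries_eq_bot_iff_nilpotencyClass_le.mpr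
      (upperCentralSeries_eq_top_iff_nilpotencyClass_le.mp htop))
end
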